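/- arXiv:2004.04718 — 4 statements merged into one kernel-verified Lean document; each statement's English description precedes it below -/
import Mathlib

section
/- For any two finite graphs G and H, the independence number of the lexicographic product G × H equals the product of the independence numbers: α(G × H) = α(G) · α(H). -/
/-- The lexicographic product of two simple graphs: `(v,u)` is adjacent to `(x,y)`
iff `v ~ x` in `G`, or `v = x` and `u ~ y` in `H`. -/
def SimpleGraph.lexProd {V W : Type*} (G : SimpleGraph V) (H : SimpleGraph W) :
    SimpleGraph (V × W) where
  Adj p q := G.Adj p.1 q.1 ∨ (p.1 = q.1 ∧ H.Adj p.2 q.2)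
  symm := by
    constructor
    rintro p q (h | ⟨h1, h2⟩)
    · exact Or.inl h.symm
    · exact Or.inr ⟨h1.symm, h2.symm⟩
  loopless := by
    constructor
    rintro p (h | ⟨-, h⟩)
    · exact G.irrefl h
    · exact H.irrefl h

lemma lexProd_compl {V W : Type*} (G : SimpleGraph V) (H : SimpleGraph W) :
    (G.lexProd H)ᶜ = Gᶜ.lexProd Hᶜ := by
  ext ⟨v, u⟩ ⟨x, y⟩
  by_cases hvx : v = x
  · subst hvx
    simp only [SimpleGraph.compl_adj, SimpleGraph.lexProd, Prod.mk.injEq, not_or, not_and,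
      ne_eq, G.irrefl, not_false_iff, true_and, forall_true_left]
    try tauto
  · simp only [SimpleGraph.compl_adj, SimpleGraph.lexProd, Prod.mk.injEq, not_or, not_and,
      ne_eq, hvx, false_and, not_false_iff, or_false, and_false]
    try tauto

lemma cliqueNum_lexProd {V W : Type*} [Fintype V] [Fintype W]
    (G : SimpleGraph V) (H : SimpleGraph W) :
    (G.lexProd H).cliqueNum = G.cliqueNum * H.cliqueNum := by
  classical
  apply le_antisymm
  · obtain ⟨s, hs⟩ := (G.lexProd H).exists_isNClique_cliqueNum
    rw [← hs.card_eq]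
    rw [Finset.card_eq_sum_card_fiberwise (f := Prod.fst) (t := s.image Prod.fst)
      (fun x hx => Finset.mem_image_of_mem _ hx)]
    calc ∑ v ∈ s.image Prod.fst, (s.filter (fun p => p.1 = v)).card
        ≤ (s.image Prod.fst).card * H.cliqueNum := by
          apply Finset.sum_le_card_nsmul
          intro v hv
          have hinj : Set.InjOn Prod.snd ((s.filter (fun p => p.1 = v) : Finset (V × W)) : Set (V × W)) := by
            rintro ⟨a,b⟩ ha ⟨c,d⟩ hc h
            simp only [Finset.coe_filter, Set.mem_setOf_eq] at ha hc
            cases h; cases ha.2; cases hc.2; rfl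
          rw [← Finset.card_image_of_injOn hinj]
          apply SimpleGraph.IsClique.card_le_cliqueNum (tc := ?_)
          intro b hb d hd hbd
          simp only [Finset.coe_image, Finset.coe_filter, Set.mem_image, Set.mem_setOf_eq] at hb hd
          obtain ⟨⟨pv, pb⟩, ⟨hp, hp1⟩, hp2⟩ := hb
          obtain ⟨⟨qv, qd⟩, ⟨hq, hq1⟩, hq2⟩ := hd
          subst hp1 hq1; dsimp at hp2 hq2; subst hp2 hq2
          have := hs.isClique hp hq (by simp [hbd])
          rcases this with h | ⟨_, h⟩
          · exact absurd rfl h.ne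
          · exact h
      _ ≤ G.cliqueNum * H.cliqueNum := by
          apply Nat.mul_le_mul_right
          apply SimpleGraph.IsClique.card_le_cliqueNum (tc := ?_)
          intro a ha b hb hab
          simp only [Finset.coe_image, Set.mem_image, Finset.mem_coe] at ha hb
          obtain ⟨p, hp, rfl⟩ := ha
          obtain ⟨q, hq, rfl⟩ := hb
          have := hs.isClique hp hq (by rintro rfl; exact hab rfl)
          rcases this with h | ⟨h, _⟩
          · exact h
          · exact absurd h hab
  · obtain ⟨s, hs⟩ := G.exists_isNClique_cliqueNum
    obtain ⟨t, ht⟩ := H.exists_isNClique_cliqueNum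
    rw [← hs.card_eq, ← ht.card_eq, ← Finset.card_product]
    apply SimpleGraph.IsClique.card_le_cliqueNum (tc := ?_)
    rintro ⟨a, b⟩ hab ⟨c, d⟩ hcd hne
    simp only [Finset.coe_product, Set.mem_prod, Finset.mem_coe] at hab hcd
    by_cases hac : a = c
    · subst hac
      exact Or.inr ⟨rfl, ht.isClique hab.2 hcd.2 (fun h => hne (by rw [h]))⟩
    · exact Or.inl (hs.isClique hab.1 hcd.1 hac)

theorem indepNum_lexProd {V W : Type*} [Fintype V] [Fintype W]
    (G : SimpleGraph V) (H : SimpleGraph W) :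
    (G.lexProd H)ᶜ.cliqueNum = Gᶜ.cliqueNum * Hᶜ.cliqueNum := by
  rw [lexProd_compl, cliqueNum_lexProd]
end

section
/- Let S be a finite set, let s : V → ℕ for a finite index set V with ∑_{v ∈ V} s(v) = |S| = m > 0, and let 1 = m_1 < m_2 < ⋯ < m_{k+1} be integers with |{v : s(v) > 0}| ≤ m_{k+1} − 1. Then there exists t with 1 ≤ t ≤ k and a set of m_t indices v ∈ V, each satisfying s(v) ≥ m / (2^t · m_{t+1}). -/
open Finset

/-- Pigeonhole claim from the lexicographic product lemma: if `s : V → ℕ` sums to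
`m > 0`, and `1 = M 1 < M 2 < ⋯ < M (k+1)` with the number of indices of positive
`s`-value at most `M (k+1) − 1`, then for some `1 ≤ t ≤ k` there are `M t` indices
`v` with `s v ≥ m / (2^t * M (t+1))`. -/
theorem pigeonhole_fibres {V : Type*} [Fintype V] (s : V → ℕ) (m k : ℕ)
    (M : ℕ → ℕ)
    (hsum : ∑ v, s v = m) (hm : 0 < m)
    (hM1 : M 1 = 1)
    (hMmono : ∀ i, 1 ≤ i → i ≤ k → M i < M (i + 1))
    (hsupp : (Finset.univ.filter fun v => 0 < s v).card ≤ M (k + 1) - 1) :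
    ∃ t, 1 ≤ t ∧ t ≤ k ∧ ∃ A : Finset V, A.card = M t ∧
      ∀ v ∈ A, (m : ℝ) / (2 ^ t * M (t + 1)) ≤ (s v : ℝ) := by
  classical
  set P : Finset V := Finset.univ.filter fun v => 0 < s v with hP
  rcases Nat.eq_zero_or_pos k with hk0 | hk
  · exfalso
    subst hk0
    rw [show (0:ℕ) + 1 = 1 from rfl, hM1] at hsupp
    have hPempty : ∀ v, s v = 0 := by
      intro v
      by_contra h
      have hv : v ∈ P := by simp [hP, Nat.pos_of_ne_zero h]
      have := Finset.card_pos.mpr ⟨v, hv⟩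
      omega
    rw [Finset.sum_congr rfl (fun v _ => hPempty v)] at hsum
    simp at hsum
    omega
  by_contra hcon
  push_neg at hcon
  set c : ℕ → ℝ := fun t => (m : ℝ) / (2 ^ t * M (t + 1)) with hc
  set A : ℕ → Finset V := fun t => Finset.univ.filter fun v => c t ≤ (s v : ℝ) with hA
  have Mpos : ∀ t, 1 ≤ t → t ≤ k + 1 → 1 ≤ M t := by
    intro t
    induction t with
    | zero => omega
    | succ n ih =>
      intro _ h2
      rcases Nat.eq_zero_or_pos n with h | h
      · subst h; simp only [Nat.zero_add]; omega
      · have h3 := hMmono n h (by omega)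
        have h4 := ih h (by omega)
        omega
  have cpos : ∀ t, 1 ≤ t → t ≤ k → 0 < c t := by
    intro t h1 h2
    have h3 : 1 ≤ M (t+1) := Mpos (t+1) (by omega) (by omega)
    have h4 : (0:ℝ) < M (t+1) := by exact_mod_cast h3
    have h5 : (0:ℝ) < m := by exact_mod_cast hm
    exact div_pos h5 (by positivity)
  have cmono : ∀ t, 1 ≤ t → t + 1 ≤ k → c (t+1) ≤ c t := by
    intro t h1 h2
    have h3 : 1 ≤ M (t+1) := Mpos (t+1) (by omega) (by omega)
    have h4 : (0:ℝ) < M (t+1) := by exact_mod_cast h3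
    have h5 : M (t+1) < M (t+2) := hMmono (t+1) (by omega) (by omega)
    have h6 : (M (t+1):ℝ) ≤ M (t+2) := by exact_mod_cast h5.le
    have h7 : (0:ℝ) ≤ m := by positivity
    have h8 : (2:ℝ)^t * M (t+1) ≤ (2:ℝ)^(t+1) * M (t+2) := by
      have h9 : (2:ℝ)^t ≤ (2:ℝ)^(t+1) := by
        apply pow_le_pow_right₀ (by norm_num) (by omega)
      exact mul_le_mul h9 h6 h4.le (by positivity)
    simp only [hc]
    exact div_le_div_of_nonneg_left h7 (by positivity) h8
  have hcard : ∀ t, 1 ≤ t → t ≤ k → (A t).card < M t := by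
    intro t h1 h2
    by_contra h
    push_neg at h
    obtain ⟨B, hBsub, hBcard⟩ := Finset.exists_subset_card_eq h
    obtain ⟨v, hvB, hvlt⟩ := hcon t h1 h2 B hBcard
    have hv := hBsub hvB
    simp only [hA, Finset.mem_filter, Finset.mem_univ, true_and] at hv
    rw [hc] at hv
    linarith
  set A' : ℕ → Finset V := fun t => if t ≤ k then A t else P with hA'
  have step : ∀ t, 1 ≤ t → t ≤ k → A' t ⊆ A' (t+1) := by
    intro t h1 h2 v hv
    rcases lt_or_eq_of_le h2 with h | h
    · simp only [hA', if_pos h2, if_pos (by omega : t+1 ≤ k)] at hv ⊢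
      simp only [hA, Finset.mem_filter, Finset.mem_univ, true_and] at hv ⊢
      exact le_trans (cmono t h1 (by omega)) hv
    · subst h
      simp only [hA', if_pos le_rfl, if_neg (by omega : ¬ (t+1 ≤ t))] at hv ⊢
      simp only [hA, Finset.mem_filter, Finset.mem_univ, true_and] at hv
      have h3 := cpos t h1 le_rfl
      have h4 : (0:ℝ) < s v := lt_of_lt_of_le h3 hv
      simp only [hP, Finset.mem_filter, Finset.mem_univ, true_and]
      exact_mod_cast h4
  have mono : ∀ j, j ≤ k + 1 → ∀ i, 1 ≤ i → i ≤ j → A' i ⊆ A' j := by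
    intro j
    induction j with
    | zero => omega
    | succ n ih =>
      intro hj i h1 hij
      rcases Nat.lt_or_ge i (n+1) with h | h
      · exact (ih (by omega) i h1 (by omega)).trans (step n (by omega) (by omega))
      · have : i = n + 1 := by omega
        subst this; exact subset_rfl
  set D : ℕ → Finset V := fun t => A' (t+1) \ A' t with hD
  have hdisj : ∀ i ∈ Finset.Icc 1 k, ∀ j ∈ Finset.Icc 1 k, i ≠ j → Disjoint (D i) (D j) := by
    have key : ∀ i j, 1 ≤ i → i < j → j ≤ k → Disjoint (D i) (D j) := by
      intro i j h1 h2 h3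
      have hsub : D i ⊆ A' j := (Finset.sdiff_subset).trans (mono j (by omega) (i+1) (by omega) (by omega))
      have : Disjoint (D j) (A' j) := Finset.sdiff_disjoint
      exact (this.mono_right hsub).symm
    intro i hi j hj hne
    rw [Finset.mem_Icc] at hi hj
    rcases Nat.lt_or_ge i j with h | h
    · exact key i j hi.1 h hj.2
    · exact (key j i hj.1 (by omega) hi.2).symm
  have cover : P = (Finset.Icc 1 k).biUnion D := by
    apply Finset.Subset.antisymm
    · intro v hv
      have aux : ∀ j, j ≤ k → v ∈ A' (j+1) → ∃ t ∈ Finset.Icc 1 k, v ∈ D t := by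
        intro j
        induction j with
        | zero =>
          intro _ hv1
          exfalso
          have h1 := hcard 1 le_rfl hk
          rw [hM1] at h1
          have h2 : A 1 = ∅ := Finset.card_eq_zero.mp (by omega)
          have h3 : v ∈ (if (0:ℕ)+1 ≤ k then A (0+1) else P) := hv1
          rw [if_pos (by omega : (0:ℕ)+1 ≤ k)] at h3
          have h4 : v ∈ A 1 := h3
          rw [h2] at h4
          exact Finset.notMem_empty v h4
        | succ n ih =>
          intro hn hv1
          by_cases h : v ∈ A' (n+1)
          · exact ih (by omega) h
          · exact ⟨n+1, Finset.mem_Icc.mpr ⟨by omega, by omega⟩, Finset.mem_sdiff.mpr ⟨hv1, h⟩⟩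
      have hvk : v ∈ A' (k+1) := by rw [hA']; simp only [if_neg (by omega : ¬ (k+1 ≤ k))]; exact hv
      obtain ⟨t, ht, hvt⟩ := aux k le_rfl hvk
      exact Finset.mem_biUnion.mpr ⟨t, ht, hvt⟩
    · intro v hv
      obtain ⟨t, ht, hvt⟩ := Finset.mem_biUnion.mp hv
      rw [Finset.mem_Icc] at ht
      have h1 : v ∈ A' (t+1) := (Finset.mem_sdiff.mp hvt).1
      have h2 : A' (t+1) ⊆ A' (k+1) := mono (k+1) le_rfl (t+1) (by omega) (by omega)
      have h3 := h2 h1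
      have h4 : v ∈ (if k + 1 ≤ k then A (k+1) else P) := h3
      rwa [if_neg (by omega : ¬ (k+1 ≤ k))] at h4
  have hsumP : ∑ v ∈ P, (s v : ℝ) = (m : ℝ) := by
    have h0 : ∑ v ∈ P, s v = m := by
      rw [← hsum]
      apply Finset.sum_subset (Finset.subset_univ P)
      intro v _ hv
      simp only [hP, Finset.mem_filter, Finset.mem_univ, true_and] at hv
      omega
    exact_mod_cast h0
  have key : (m:ℝ) = ∑ t ∈ Finset.Icc 1 k, ∑ v ∈ D t, (s v : ℝ) := by
    rw [← hsumP, cover, Finset.sum_biUnion hdisj]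
  have bound : ∀ t ∈ Finset.Icc 1 k, ∑ v ∈ D t, (s v:ℝ) ≤ (m:ℝ) * (1/2)^t := by
    intro t ht
    rw [Finset.mem_Icc] at ht
    have hM1t : 1 ≤ M (t+1) := Mpos (t+1) (by omega) (by omega)
    have hM1t' : (0:ℝ) < M (t+1) := by exact_mod_cast hM1t
    have hcardD : (D t).card ≤ M (t+1) := by
      rcases lt_or_eq_of_le ht.2 with h | h
      · have h1 := hcard (t+1) (by omega) (by omega)
        have h2 : D t ⊆ A (t+1) := by
          rw [hD]
          simp only [hA', if_pos (by omega : t+1 ≤ k)]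
          exact Finset.sdiff_subset
        calc (D t).card ≤ (A (t+1)).card := Finset.card_le_card h2
          _ ≤ M (t+1) := h1.le
      · have h2 : D t ⊆ P := by
          rw [hD]
          simp only [hA', if_neg (by omega : ¬ (t+1 ≤ k))]
          exact Finset.sdiff_subset
        calc (D t).card ≤ P.card := Finset.card_le_card h2
          _ ≤ M (k+1) - 1 := hsupp
          _ ≤ M (t+1) := by rw [h]; omega
    have hvle : ∀ v ∈ D t, (s v : ℝ) ≤ c t := by
      intro v hv
      have hv' : v ∉ A' t := (Finset.mem_sdiff.mp hv).2
      have hv2 : v ∉ (if t ≤ k then A t else P) := hv'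
      rw [if_pos ht.2] at hv2
      simp only [hA, Finset.mem_filter, Finset.mem_univ, true_and, not_le] at hv2
      exact hv2.le
    have hct := cpos t ht.1 ht.2
    calc ∑ v ∈ D t, (s v:ℝ) ≤ (D t).card • c t := Finset.sum_le_card_nsmul _ _ _ hvle
      _ = ((D t).card : ℝ) * c t := by rw [nsmul_eq_mul]
      _ ≤ (M (t+1) : ℝ) * c t := by
          apply mul_le_mul_of_nonneg_right _ hct.le
          exact_mod_cast hcardD
      _ = (m:ℝ) * (1/2)^t := by
          rw [hc]
          rw [one_div, inv_pow]
          field_simp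
  have geo : ∑ t ∈ Finset.Icc 1 k, (m:ℝ) * (1/2)^t < m := by
    rw [← Finset.mul_sum]
    have hmR : (0:ℝ) < m := by exact_mod_cast hm
    have h1 : ∑ t ∈ Finset.Icc 1 k, ((1:ℝ)/2)^t < 1 := by
      have e1 : ∑ t ∈ Finset.Icc 1 k, ((1:ℝ)/2)^t = (1/2) * ∑ i ∈ Finset.range k, (1/2)^i := by
        rw [← Finset.Ico_add_one_right_eq_Icc, Finset.sum_Ico_eq_sum_range]
        rw [Finset.mul_sum]
        apply Finset.sum_congr rfl
        intro i _
        rw [pow_add, pow_one]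
      have e2 : ∑ i ∈ Finset.range k, ((1:ℝ)/2)^i = 2 - 2*(1/2)^k := by
        rw [geom_sum_eq (by norm_num : ((1:ℝ)/2) ≠ 1)]
        field_simp
        ring
      have e3 : (0:ℝ) < (1/2)^k := by positivity
      rw [e1, e2]; linarith
    calc (m:ℝ) * ∑ t ∈ Finset.Icc 1 k, ((1:ℝ)/2)^t < (m:ℝ) * 1 :=
          mul_lt_mul_of_pos_left h1 hmR
      _ = m := mul_one _
  have final := Finset.sum_le_sum bound
  rw [← key] at final
  linarith
end

section
/- For any integer n ≥ 2 there exists an n-vertex graph G such that for every integer r ≥ 2, every subset of ⌈2^{r+8}·log₂ n⌉ vertices of G contains both a clique of size r and an independent set of size r. -/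
open Finset Real
set_option maxHeartbeats 1000000

lemma one_add_exp_neg_le (l : ℝ) : 1 + Real.exp (-l) ≤ 2 * Real.exp (-l/2 + l^2/8) := by
  have h := Real.cosh_le_exp_half_sq (l/2)
  rw [Real.cosh_eq, show ((l/2)^2/2 : ℝ) = l^2/8 by ring] at h
  have hpos : (0:ℝ) < Real.exp (-l/2) := Real.exp_pos _
  have one : (1:ℝ) = Real.exp (-l/2) * Real.exp (l/2) := by
    rw [← Real.exp_add, show (-l/2 + l/2 : ℝ) = 0 by ring, Real.exp_zero]
  have key : Real.exp (-l) = Real.exp (-l/2) * Real.exp (-(l/2)) := by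
    rw [← Real.exp_add]; ring_nf
  calc 1 + Real.exp (-l) = Real.exp (-l/2) * (Real.exp (l/2) + Real.exp (-(l/2))) := by
        rw [mul_add, ← one, ← key]
    _ ≤ Real.exp (-l/2) * (2 * Real.exp (l^2/8)) :=
        mul_le_mul_of_nonneg_left (by linarith) hpos.le
    _ = 2 * Real.exp (-l/2 + l^2/8) := by rw [Real.exp_add]; ring

lemma chernoff_tail (N : ℕ) (hN : 1 ≤ N) (d : ℝ) (hd : 0 < d) :
    ∑ k ∈ Finset.range (N+1), (if (k:ℝ) ≤ N/2 - d then (N.choose k : ℝ) else 0)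
      ≤ 2^N * Real.exp (-(2*d^2)/N) := by
  have hNpos : (0:ℝ) < N := by exact_mod_cast hN
  set l : ℝ := 4*d/N with hl
  have hlpos : 0 < l := by positivity
  have hterm : ∀ k ∈ Finset.range (N+1),
      (if (k:ℝ) ≤ N/2 - d then (N.choose k:ℝ) else 0)
      ≤ Real.exp (l*(N/2 - d)) * (Real.exp (-l)^k * (N.choose k:ℝ)) := by
    intro k _
    split_ifs with hk
    · have h1 : (1:ℝ) ≤ Real.exp (l*(N/2 - d)) * Real.exp (-l)^k := by
        rw [← Real.exp_nat_mul, ← Real.exp_add, ← Real.exp_zero]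
        apply Real.exp_le_exp.mpr
        have h2 : (k:ℝ)*l ≤ ((N:ℝ)/2 - d)*l := mul_le_mul_of_nonneg_right hk hlpos.le
        nlinarith
      have h3 := mul_le_mul_of_nonneg_right h1 (by positivity : (0:ℝ) ≤ (N.choose k:ℝ))
      nlinarith [h3]
    · positivity
  calc ∑ k ∈ Finset.range (N+1), (if (k:ℝ) ≤ N/2 - d then (N.choose k : ℝ) else 0)
      ≤ ∑ k ∈ Finset.range (N+1), Real.exp (l*(N/2 - d)) * (Real.exp (-l)^k * (N.choose k:ℝ)) :=
        Finset.sum_le_sum hterm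
    _ = Real.exp (l*(N/2 - d)) * ∑ k ∈ Finset.range (N+1), Real.exp (-l)^k * (N.choose k:ℝ) := by
        rw [Finset.mul_sum]
    _ = Real.exp (l*(N/2 - d)) * (Real.exp (-l) + 1)^N := by
        rw [add_pow]; simp
    _ ≤ Real.exp (l*(N/2 - d)) * (2 * Real.exp (-l/2 + l^2/8))^N := by
        apply mul_le_mul_of_nonneg_left _ (Real.exp_pos _).le
        apply pow_le_pow_left₀ (by positivity)
        linarith [one_add_exp_neg_le l]
    _ = 2^N * Real.exp (l*(N/2 - d) + N*(-l/2 + l^2/8)) := by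
        rw [mul_pow, ← Real.exp_nat_mul, Real.exp_add]; ring
    _ = 2^N * Real.exp (-(2*d^2)/N) := by
        congr 1
        rw [hl]
        field_simp
        ring


lemma count_card_eq {ι : Type*} [Fintype ι] [DecidableEq ι] (P : Finset ι) (k : ℕ) :
    (Finset.univ.filter (fun g : ι → Bool => (P.filter (fun i => g i)).card = k)).card
      = P.card.choose k * 2 ^ (Fintype.card ι - P.card) := by
  rw [← Finset.card_powersetCard,
    show Fintype.card ι - P.card = (Finset.univ \ P).card by
      rw [Finset.card_sdiff_of_subset (Finset.subset_univ P), Finset.card_univ],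
    ← Finset.card_powerset, ← Finset.card_product]
  apply Finset.card_bij'
    (i := fun g _ => (P.filter (fun i => g i), (Finset.univ \ P).filter (fun i => g i)))
    (j := fun pr _ => fun i => decide (i ∈ pr.1 ∪ pr.2))
  · intro g hg
    rw [Finset.mem_filter] at hg
    rw [Finset.mem_product, Finset.mem_powersetCard, Finset.mem_powerset]
    exact ⟨⟨Finset.filter_subset _ _, hg.2⟩, Finset.filter_subset _ _⟩
  · intro pr hpr
    exact Finset.mem_filter.mpr ⟨Finset.mem_univ _, by
      rw [Finset.mem_product, Finset.mem_powersetCard, Finset.mem_powerset] at hpr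
      obtain ⟨⟨h1, hk⟩, h2⟩ := hpr
      rw [← hk]
      congr 1
      ext i
      simp only [Finset.mem_filter, Finset.mem_union, decide_eq_true_eq]
      constructor
      · rintro ⟨hiP, hi | hi⟩
        · exact hi
        · exact absurd hiP (Finset.mem_sdiff.mp (h2 hi)).2
      · intro hi
        exact ⟨h1 hi, Or.inl hi⟩⟩
  · intro g hg
    funext i
    by_cases hP : i ∈ P <;> cases hgi : g i <;>
      simp [Finset.mem_union, Finset.mem_filter, Finset.mem_sdiff, hP, hgi]
  · intro pr hpr
    rw [Finset.mem_product, Finset.mem_powersetCard, Finset.mem_powerset] at hpr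
    obtain ⟨⟨h1, _⟩, h2⟩ := hpr
    ext i
    · simp only [Finset.mem_filter, Finset.mem_union, decide_eq_true_eq]
      constructor
      · rintro ⟨hiP, hi | hi⟩
        · exact hi
        · exact absurd hiP (Finset.mem_sdiff.mp (h2 hi)).2
      · intro hi; exact ⟨h1 hi, Or.inl hi⟩
    · simp only [Finset.mem_filter, Finset.mem_union, Finset.mem_sdiff, decide_eq_true_eq]
      constructor
      · rintro ⟨⟨_, hiP⟩, hi | hi⟩
        · exact absurd (h1 hi) hiP
        · exact hi
      · intro hi
        exact ⟨Finset.mem_sdiff.mp (h2 hi), Or.inr hi⟩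

lemma count_tail_eq {ι : Type*} [Fintype ι] [DecidableEq ι] (P : Finset ι) (c : ℝ) :
    ((Finset.univ.filter (fun g : ι → Bool => ((P.filter (fun i => g i)).card : ℝ) ≤ c)).card : ℝ)
      = (∑ k ∈ Finset.range (P.card+1), if (k:ℝ) ≤ c then (P.card.choose k:ℝ) else 0)
          * 2 ^ (Fintype.card ι - P.card) := by
  rw [Finset.card_eq_sum_card_fiberwise
    (f := fun g : ι → Bool => (P.filter (fun i => g i)).card) (t := Finset.range (P.card+1))
    (fun g _ => Finset.mem_range.mpr (Nat.lt_succ_of_le (Finset.card_filter_le _ _)))]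
  push_cast
  rw [Finset.sum_mul]
  apply Finset.sum_congr rfl
  intro k _
  have hfib : ((Finset.univ.filter (fun g : ι → Bool => ((P.filter (fun i => g i)).card : ℝ) ≤ c)).filter
      (fun g => (P.filter (fun i => g i)).card = k))
      = if (k:ℝ) ≤ c then (Finset.univ.filter (fun g : ι → Bool => (P.filter (fun i => g i)).card = k)) else ∅ := by
    split_ifs with hk
    · ext g
      simp only [Finset.mem_filter, Finset.mem_univ, true_and]
      constructor
      · rintro ⟨_, h⟩; exact h
      · intro h; exact ⟨by rw [h]; exact hk, h⟩
    · ext g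
      simp only [Finset.mem_filter, Finset.mem_univ, true_and, Finset.notMem_empty, iff_false]
      rintro ⟨h1, h2⟩
      rw [h2] at h1
      exact hk h1
  rw [hfib]
  split_ifs with hk
  · rw [count_card_eq]; push_cast; ring
  · simp


def e2 {V : Type*} [Fintype V] [DecidableEq V] (H : SimpleGraph V) [DecidableRel H.Adj]
    (A : Finset V) : ℕ :=
  ∑ v ∈ A, (A.filter (H.Adj v)).card

def mkGraph {n : ℕ} (f : Fin n × Fin n → Bool) : SimpleGraph (Fin n) where
  Adj u v := (u < v ∧ f (u, v)) ∨ (v < u ∧ f (v, u))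
  symm := ⟨fun u v h => h.symm⟩
  loopless := ⟨fun u h => by
    rcases h with ⟨h, _⟩ | ⟨h, _⟩ <;> exact lt_irrefl u h⟩

instance mkGraph_decAdj {n : ℕ} (f : Fin n × Fin n → Bool) : DecidableRel (mkGraph f).Adj :=
  fun u v => inferInstanceAs (Decidable ((u < v ∧ f (u, v)) ∨ (v < u ∧ f (v, u))))

def PA {n : ℕ} (A : Finset (Fin n)) : Finset (Fin n × Fin n) :=
  (A ×ˢ A).filter (fun p => p.1 < p.2)

/-- sum of within-`A` degrees equals the number of adjacent ordered pairs -/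
lemma e2_eq_pairs {V : Type*} [Fintype V] [DecidableEq V] (H : SimpleGraph V)
    [DecidableRel H.Adj] (A : Finset V) :
    e2 H A = ((A ×ˢ A).filter (fun p : V × V => H.Adj p.1 p.2)).card := by
  rw [e2, Finset.card_eq_sum_card_fiberwise
    (f := fun p : V × V => p.1) (t := A)
    (fun p hp => (Finset.mem_product.mp (Finset.mem_filter.mp hp).1).1)]
  apply Finset.sum_congr rfl
  intro v hv
  apply Finset.card_nbij' (i := fun w => (v, w)) (j := fun p => p.2)
  · intro w hw
    rw [Finset.mem_coe, Finset.mem_filter] at hw ⊢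
    rw [Finset.mem_filter, Finset.mem_product]
    exact ⟨⟨⟨hv, hw.1⟩, hw.2⟩, rfl⟩
  · intro p hp
    rw [Finset.mem_coe, Finset.mem_filter, Finset.mem_filter, Finset.mem_product] at hp
    obtain ⟨⟨⟨h1, h2⟩, h3⟩, h4⟩ := hp
    rw [Finset.mem_coe, Finset.mem_filter]
    exact ⟨h2, h4 ▸ h3⟩
  · intro w _; rfl
  · intro p hp
    rw [Finset.mem_coe, Finset.mem_filter, Finset.mem_filter, Finset.mem_product] at hp
    obtain ⟨⟨⟨h1, h2⟩, h3⟩, h4⟩ := hp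
    obtain ⟨p1, p2⟩ := p
    simp only at h4
    rw [h4]

lemma e2_mkGraph {n : ℕ} (f : Fin n × Fin n → Bool) (A : Finset (Fin n)) :
    e2 (mkGraph f) A = 2 * ((PA A).filter (fun p => f p)).card := by
  rw [e2_eq_pairs]
  have hAdj : ∀ p : Fin n × Fin n, (mkGraph f).Adj p.1 p.2
      ↔ (p.1 < p.2 ∧ f p) ∨ (p.2 < p.1 ∧ f p.swap) := by
    intro ⟨p1, p2⟩
    exact Iff.rfl
  have hsplit : (A ×ˢ A).filter (fun p : Fin n × Fin n => (mkGraph f).Adj p.1 p.2)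
      = ((A ×ˢ A).filter (fun p => p.1 < p.2 ∧ f p))
        ∪ ((A ×ˢ A).filter (fun p => p.2 < p.1 ∧ f p.swap)) := by
    ext p
    simp only [Finset.mem_union, Finset.mem_filter, hAdj p]
    tauto
  have hdisj : Disjoint ((A ×ˢ A).filter (fun p : Fin n × Fin n => p.1 < p.2 ∧ f p))
      ((A ×ˢ A).filter (fun p => p.2 < p.1 ∧ f p.swap)) := by
    rw [Finset.disjoint_left]
    intro p hp1 hp2
    exact asymm (Finset.mem_filter.mp hp1).2.1 (Finset.mem_filter.mp hp2).2.1
  have hswap : ((A ×ˢ A).filter (fun p : Fin n × Fin n => p.2 < p.1 ∧ f p.swap)).card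
      = ((A ×ˢ A).filter (fun p : Fin n × Fin n => p.1 < p.2 ∧ f p)).card := by
    apply Finset.card_nbij' (i := fun p => p.swap) (j := fun p => p.swap)
    · intro p hp
      rw [Finset.mem_coe, Finset.mem_filter, Finset.mem_product] at hp ⊢
      exact ⟨⟨hp.1.2, hp.1.1⟩, hp.2⟩
    · intro p hp
      rw [Finset.mem_coe, Finset.mem_filter, Finset.mem_product] at hp ⊢
      exact ⟨⟨hp.1.2, hp.1.1⟩, hp.2⟩
    · intro p _; exact Prod.swap_swap p
    · intro p _; exact Prod.swap_swap p
  have hPA : ((A ×ˢ A).filter (fun p : Fin n × Fin n => p.1 < p.2 ∧ f p))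
      = (PA A).filter (fun p => f p) := by
    rw [PA, Finset.filter_filter]
  rw [hsplit, Finset.card_union_of_disjoint hdisj, hswap, hPA]
  ring

lemma PA_card {n : ℕ} (A : Finset (Fin n)) :
    2 * (PA A).card + A.card = A.card * A.card := by
  have hswap : ((A ×ˢ A).filter (fun p : Fin n × Fin n => p.2 < p.1)).card = (PA A).card := by
    rw [PA]
    apply Finset.card_nbij' (i := fun p => p.swap) (j := fun p => p.swap)
    · intro p hp
      rw [Finset.mem_coe, Finset.mem_filter, Finset.mem_product] at hp ⊢
      exact ⟨⟨hp.1.2, hp.1.1⟩, hp.2⟩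
    · intro p hp
      rw [Finset.mem_coe, Finset.mem_filter, Finset.mem_product] at hp ⊢
      exact ⟨⟨hp.1.2, hp.1.1⟩, hp.2⟩
    · intro p _; exact Prod.swap_swap p
    · intro p _; exact Prod.swap_swap p
  have hdiagcard : ((A ×ˢ A).filter (fun p : Fin n × Fin n => p.1 = p.2)).card = A.card := by
    apply Finset.card_nbij' (i := fun p => p.1) (j := fun v => (v, v))
    · intro p hp
      rw [Finset.mem_coe, Finset.mem_filter, Finset.mem_product] at hp
      exact hp.1.1
    · intro v hv
      rw [Finset.mem_coe, Finset.mem_filter, Finset.mem_product]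
      exact ⟨⟨hv, hv⟩, rfl⟩
    · intro p hp
      rw [Finset.mem_coe, Finset.mem_filter] at hp
      obtain ⟨p1, p2⟩ := p
      simp only at hp ⊢
      rw [hp.2]
    · intro v _; rfl
  have hdisj1 : Disjoint (PA A) ((A ×ˢ A).filter (fun p : Fin n × Fin n => p.2 < p.1)) := by
    rw [Finset.disjoint_left]
    intro p hp1 hp2
    rw [PA, Finset.mem_filter] at hp1
    exact asymm hp1.2 (Finset.mem_filter.mp hp2).2
  have hdisj2 : Disjoint (PA A ∪ (A ×ˢ A).filter (fun p : Fin n × Fin n => p.2 < p.1))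
      ((A ×ˢ A).filter (fun p : Fin n × Fin n => p.1 = p.2)) := by
    rw [Finset.disjoint_left]
    intro p hp1 hp2
    have he : p.1 = p.2 := (Finset.mem_filter.mp hp2).2
    rcases Finset.mem_union.mp hp1 with h | h
    · rw [PA, Finset.mem_filter] at h
      exact absurd he (ne_of_lt h.2)
    · exact absurd he.symm (ne_of_lt (Finset.mem_filter.mp h).2)
  have huniv : A ×ˢ A = (PA A ∪ (A ×ˢ A).filter (fun p : Fin n × Fin n => p.2 < p.1))
      ∪ (A ×ˢ A).filter (fun p : Fin n × Fin n => p.1 = p.2) := by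
    ext p
    simp only [Finset.mem_union, PA, Finset.mem_filter]
    constructor
    · intro hp
      rcases lt_trichotomy p.1 p.2 with h | h | h
      · exact Or.inl (Or.inl ⟨hp, h⟩)
      · exact Or.inr ⟨hp, h⟩
      · exact Or.inl (Or.inr ⟨hp, h⟩)
    · rintro ((⟨hp, _⟩ | ⟨hp, _⟩) | ⟨hp, _⟩) <;> exact hp
  have hcard := congrArg Finset.card huniv
  rw [Finset.card_product, Finset.card_union_of_disjoint hdisj2,
    Finset.card_union_of_disjoint hdisj1, hswap, hdiagcard] at hcard
  omega

lemma e2_compl {V : Type*} [Fintype V] [DecidableEq V] (H : SimpleGraph V)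
    [DecidableRel H.Adj] (A : Finset V) :
    e2 H A + e2 Hᶜ A + A.card = A.card * A.card := by
  have hpt : ∀ v ∈ A, (A.filter (H.Adj v)).card + (A.filter (Hᶜ.Adj v)).card + 1 = A.card := by
    intro v hv
    have hdisj : Disjoint (A.filter (H.Adj v)) (A.filter (Hᶜ.Adj v)) := by
      rw [Finset.disjoint_left]
      intro w hw1 hw2
      have h2 := (Finset.mem_filter.mp hw2).2
      rw [SimpleGraph.compl_adj] at h2
      exact h2.2 (Finset.mem_filter.mp hw1).2
    have hunion : (A.filter (H.Adj v)) ∪ (A.filter (Hᶜ.Adj v)) = A.erase v := by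
      ext w
      rw [Finset.mem_union, Finset.mem_filter, Finset.mem_filter, Finset.mem_erase,
        SimpleGraph.compl_adj]
      constructor
      · rintro (⟨hw, ha⟩ | ⟨hw, hne, _⟩)
        · exact ⟨ha.ne', hw⟩
        · exact ⟨fun h => hne h.symm, hw⟩
      · rintro ⟨hne, hw⟩
        by_cases ha : H.Adj v w
        · exact Or.inl ⟨hw, ha⟩
        · exact Or.inr ⟨hw, ⟨fun h => hne h.symm, ha⟩⟩
    have hu := Finset.card_union_of_disjoint hdisj
    rw [hunion] at hu
    have h2 := Finset.card_erase_add_one hv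
    omega
  have hsum : ∑ v ∈ A, ((A.filter (H.Adj v)).card + (A.filter (Hᶜ.Adj v)).card + 1)
      = ∑ _v ∈ A, A.card := Finset.sum_congr rfl hpt
  simp only [Finset.sum_add_distrib, Finset.sum_const, smul_eq_mul, mul_one] at hsum
  rw [e2, e2]
  omega


lemma mono_aux (L x y : ℝ) (hL : 0 < L) (h4 : 4*L ≤ y) (hyx : y ≤ x) :
    (y-1)/2 - 2*Real.sqrt (y*L) ≤ (x-1)/2 - 2*Real.sqrt (x*L) := by
  have hy0 : 0 < y := by linarith
  have hx0 : 0 < x := by linarith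
  rw [Real.sqrt_mul hy0.le, Real.sqrt_mul hx0.le]
  have hab : Real.sqrt y ≤ Real.sqrt x := Real.sqrt_le_sqrt hyx
  have h2l : 2*Real.sqrt L ≤ Real.sqrt y := by
    have h := Real.sqrt_le_sqrt h4
    rwa [show (4:ℝ)*L = (2*Real.sqrt L)^2 by
        rw [mul_pow, Real.sq_sqrt hL.le]; norm_num,
      Real.sqrt_sq (by positivity)] at h
  have hsx := Real.sq_sqrt hx0.le
  have hsy := Real.sq_sqrt hy0.le
  have hsL := Real.sq_sqrt hL.le
  nlinarith [mul_le_mul_of_nonneg_left h2l (sub_nonneg.2 hab),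
    sq_nonneg (Real.sqrt x - Real.sqrt y), Real.sqrt_nonneg L,
    Real.sqrt_nonneg y, Real.sqrt_nonneg x]

lemma num_aux (L c y q : ℝ) (hL : 1 ≤ L) (hc1 : 1 ≤ c) (hcu : c ≤ 1.42)
    (hy16 : 16 ≤ y) (hq : q ≤ c*y*L) :
    (y^2 - 15*y)*L ≤ ((2*y^2 - 15*(c*y))*L - 1)/2 - 2*q := by
  have hy0 : (0:ℝ) < y := by linarith
  have hyL : (16:ℝ) ≤ y*L := by nlinarith
  nlinarith [mul_le_mul_of_nonneg_right hcu (by nlinarith : (0:ℝ) ≤ y*L)]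

lemma greedy {V : Type*} [Fintype V] [DecidableEq V] (H : SimpleGraph V) [DecidableRel H.Adj]
    (L : ℝ) (hL : 1 ≤ L)
    (hdisc : ∀ B : Finset V, 2 ≤ B.card →
      ((B.card : ℝ) * B.card - B.card) / 2 - 2 * B.card * Real.sqrt (B.card * L) ≤ (e2 H B : ℝ)) :
    ∀ r : ℕ, 1 ≤ r → ∀ B : Finset V,
      ((2:ℝ) ^ (r+8) - 15 * (Real.sqrt 2) ^ (r+8)) * L ≤ B.card →
      ∃ K ⊆ B, H.IsNClique r K := by
  have hc0 : (0:ℝ) ≤ Real.sqrt 2 := Real.sqrt_nonneg 2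
  have hc2 : Real.sqrt 2 ^ 2 = 2 := Real.sq_sqrt (by norm_num)
  have hc1 : (1:ℝ) ≤ Real.sqrt 2 := Real.one_le_sqrt.mpr (by norm_num)
  have hcu : Real.sqrt 2 ≤ 1.42 := by nlinarith
  have hLpos : (0:ℝ) < L := lt_of_lt_of_le one_pos hL
  intro r hr
  induction r, hr using Nat.le_induction with
  | base =>
    intro B hB
    have h9 : (Real.sqrt 2) ^ (1+8) = 16 * Real.sqrt 2 := by
      rw [show 1+8 = 8+1 by rfl, pow_succ, show (8:ℕ) = 2*4 by rfl, pow_mul, hc2]; norm_num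
    have hpos : (0:ℝ) < B.card := by
      have : (100:ℝ) ≤ ((2:ℝ) ^ (1+8) - 15 * (Real.sqrt 2) ^ (1+8)) := by
        rw [h9]; norm_num; nlinarith
      nlinarith
    have hne : B.Nonempty := by
      rw [← Finset.card_pos]; exact_mod_cast hpos
    obtain ⟨v, hv⟩ := hne
    exact ⟨{v}, Finset.singleton_subset_iff.mpr hv, SimpleGraph.isNClique_singleton.mpr rfl⟩
  | succ r hr IH =>
    intro B hB
    set c := Real.sqrt 2 with hc
    set y : ℝ := c ^ (r+8) with hy
    have hy16 : (16:ℝ) ≤ y := by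
      calc (16:ℝ) = c ^ 8 := by rw [show (8:ℕ) = 2*4 by rfl, pow_mul, hc2]; norm_num
      _ ≤ c ^ (r+8) := pow_le_pow_right₀ hc1 (by omega)
    have hy2 : (2:ℝ) ^ (r+8) = y^2 := by
      rw [hy, ← pow_mul, show (r+8)*2 = 2*(r+8) by ring, pow_mul, hc2]
    have hstep : (2:ℝ) ^ (r+1+8) = 2 * y^2 := by
      rw [show r+1+8 = (r+8)+1 by ring, pow_succ, hy2]; ring
    have hcstep : c ^ (r+1+8) = c * y := by
      rw [hy, show r+1+8 = (r+8)+1 by ring, pow_succ, mul_comm]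
    set β : ℝ := ((2:ℝ) ^ (r+1+8) - 15 * c ^ (r+1+8)) * L with hβ
    have hβs : β ≤ B.card := hB
    have hβeq : β = (2*y^2 - 15*(c*y)) * L := by rw [hβ, hstep, hcstep]
    have hkey : (171:ℝ) ≤ 2*y^2 - 15*(c*y) := by
      nlinarith [mul_nonneg (by linarith : (0:ℝ) ≤ y-16) (by linarith : (0:ℝ) ≤ 2*y+10.7),
        mul_le_mul_of_nonneg_right hcu (by linarith : (0:ℝ) ≤ y)]
    have hβ171 : 171 * L ≤ β := by rw [hβeq]; nlinarith
    have hβ4 : 4 * L ≤ β := by nlinarith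
    have hβpos : 0 < β := by nlinarith
    have hs171 : (171:ℝ) * L ≤ B.card := le_trans hβ171 hβs
    have hs2 : 2 ≤ B.card := by
      have : (2:ℝ) ≤ B.card := by nlinarith
      exact_mod_cast this
    set s : ℝ := (B.card : ℝ) with hsdef
    have hspos : (0:ℝ) < s := by nlinarith
    have hsum : ∑ _v ∈ B, (e2 H B : ℝ)/s ≤ ∑ v ∈ B, ((B.filter (H.Adj v)).card : ℝ) := by
      have he2 : (e2 H B : ℝ) = ∑ v ∈ B, ((B.filter (H.Adj v)).card : ℝ) := by
        rw [e2]; push_cast; ring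
      rw [Finset.sum_const, nsmul_eq_mul, ← hsdef, mul_div_cancel₀ _ (ne_of_gt hspos), he2]
    have hne : B.Nonempty := by
      rw [← Finset.card_pos]; omega
    obtain ⟨v, hvB, hv⟩ := Finset.exists_le_of_sum_le hne hsum
    set B' := B.filter (H.Adj v) with hB'
    have hB'card : (s - 1)/2 - 2*Real.sqrt (s*L) ≤ (B'.card:ℝ) := by
      rw [div_le_iff₀ hspos] at hv
      have hd := hdisc B hs2
      rw [← hsdef] at hd
      have h2 : ((s-1)/2 - 2*Real.sqrt (s*L))*s = (s*s-s)/2 - 2*s*Real.sqrt (s*L) := by ring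
      rw [← mul_le_mul_iff_of_pos_right hspos, h2]
      exact le_trans hd hv
    have hmono : (β-1)/2 - 2*Real.sqrt (β*L) ≤ (s-1)/2 - 2*Real.sqrt (s*L) :=
      mono_aux L s β hLpos hβ4 hβs
    have hupper : Real.sqrt (β*L) ≤ c*y*L := by
      have hsq : (c*y*L)^2 = 2*(y^2*L^2) := by
        rw [mul_pow, mul_pow, hc2]; ring
      have h1 : β*L ≤ (c*y*L)^2 := by
        rw [hsq, hβeq]
        nlinarith [mul_nonneg (mul_nonneg hc0 (by linarith : (0:ℝ) ≤ y)) (sq_nonneg L)]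
      calc Real.sqrt (β*L) ≤ Real.sqrt ((c*y*L)^2) := Real.sqrt_le_sqrt h1
      _ = c*y*L := Real.sqrt_sq (by positivity)
    have hnum := num_aux L c y (Real.sqrt (β*L)) hL hc1 hcu hy16 hupper
    rw [← hβeq] at hnum
    have hB'ge : ((2:ℝ)^(r+8) - 15*(Real.sqrt 2)^(r+8))*L ≤ (B'.card:ℝ) := by
      rw [← hc, ← hy, hy2]; linarith
    obtain ⟨K, hKsub, hK⟩ := IH B' hB'ge
    refine ⟨insert v K, ?_, hK.insert fun b hb => (Finset.mem_filter.mp (hKsub hb)).2⟩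
    exact Finset.insert_subset hvB (hKsub.trans (Finset.filter_subset _ _))

lemma low_count (n : ℕ) (hn : 2 ≤ n) (L : ℝ) (hL : 1 ≤ L) (hLn : L = Real.logb 2 n)
    (A : Finset (Fin n)) (hA : 2 ≤ A.card) :
    ((Finset.univ.filter (fun g : Fin n × Fin n → Bool =>
        (((PA A).filter (fun p => g p)).card : ℝ)
          ≤ ((PA A).card : ℝ)/2 - A.card * Real.sqrt (A.card * L))).card : ℝ)
      ≤ 2^(Fintype.card (Fin n × Fin n)) * Real.exp (-(4 * A.card * L)) := by
  have hPAc := PA_card A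
  have hsr : (2:ℝ) ≤ (A.card : ℝ) := by exact_mod_cast hA
  have hLpos : (0:ℝ) < L := by linarith
  have h2s : 2 * A.card ≤ A.card * A.card := Nat.mul_le_mul_right _ hA
  have hN1 : 1 ≤ (PA A).card := by omega
  have hNT : (PA A).card ≤ Fintype.card (Fin n × Fin n) := Finset.card_le_univ _
  have hNr : 2*((PA A).card:ℝ) + A.card = A.card * A.card := by exact_mod_cast hPAc
  have hNpos : (0:ℝ) < ((PA A).card:ℝ) := by exact_mod_cast hN1
  have hsLnn : (0:ℝ) ≤ A.card * L := by positivity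
  have hdpos : (0:ℝ) < A.card * Real.sqrt (A.card * L) := by
    apply mul_pos (by linarith) (Real.sqrt_pos.mpr (by nlinarith))
  rw [count_tail_eq (PA A) (((PA A).card : ℝ)/2 - A.card * Real.sqrt (A.card * L))]
  have hch := chernoff_tail (PA A).card hN1 (A.card * Real.sqrt (A.card * L)) hdpos
  calc (∑ k ∈ Finset.range ((PA A).card+1),
          if (k:ℝ) ≤ ((PA A).card : ℝ)/2 - A.card * Real.sqrt (A.card * L)
          then ((PA A).card.choose k:ℝ) else 0) * 2 ^ (Fintype.card (Fin n × Fin n) - (PA A).card)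
      ≤ (2^(PA A).card * Real.exp (-(2*(A.card * Real.sqrt (A.card * L))^2)/(PA A).card))
          * 2 ^ (Fintype.card (Fin n × Fin n) - (PA A).card) := by
        apply mul_le_mul_of_nonneg_right hch (by positivity)
    _ = 2^(Fintype.card (Fin n × Fin n))
          * Real.exp (-(2*(A.card * Real.sqrt (A.card * L))^2)/(PA A).card) := by
        rw [mul_comm ((2:ℝ)^(PA A).card) _, mul_assoc, ← pow_add,
          Nat.add_sub_cancel' hNT, mul_comm]
    _ ≤ 2^(Fintype.card (Fin n × Fin n)) * Real.exp (-(4 * A.card * L)) := by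
        apply mul_le_mul_of_nonneg_left _ (by positivity)
        apply Real.exp_le_exp.mpr
        rw [neg_div, neg_le_neg_iff, le_div_iff₀ hNpos]
        have hd2 : (A.card * Real.sqrt (A.card * L))^2 = (A.card:ℝ)^2 * (A.card * L) := by
          rw [mul_pow, Real.sq_sqrt hsLnn]
        rw [hd2]
        nlinarith [hNr, hsr, hL, sq_nonneg ((A.card:ℝ))]

lemma exists_good (n : ℕ) (hn : 2 ≤ n) :
    ∃ f : Fin n × Fin n → Bool, ∀ A : Finset (Fin n), 2 ≤ A.card →
      (((PA A).card : ℝ)/2 - A.card * Real.sqrt (A.card * Real.logb 2 n)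
          < (((PA A).filter (fun p => f p)).card : ℝ))
      ∧ ((((PA A).filter (fun p => f p)).card : ℝ)
          < ((PA A).card : ℝ)/2 + A.card * Real.sqrt (A.card * Real.logb 2 n)) := by
  classical
  set L : ℝ := Real.logb 2 n with hLdef
  have hnpos : (0:ℝ) < (n:ℝ) := by
    have : 0 < n := by omega
    exact_mod_cast this
  have hL : 1 ≤ L := by
    rw [hLdef, Real.le_logb_iff_rpow_le (by norm_num) hnpos, Real.rpow_one]
    exact_mod_cast hn
  have high_count : ∀ A : Finset (Fin n), 2 ≤ A.card →
      ((Finset.univ.filter (fun g : Fin n × Fin n → Bool =>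
        ((PA A).card : ℝ)/2 + A.card * Real.sqrt (A.card * L)
          ≤ (((PA A).filter (fun p => g p)).card : ℝ))).card : ℝ)
      ≤ 2^(Fintype.card (Fin n × Fin n)) * Real.exp (-(4 * A.card * L)) := by
    intro A hA
    refine le_trans ?_ (low_count n hn L hL hLdef A hA)
    have hmap : ∀ g : Fin n × Fin n → Bool,
        g ∈ Finset.univ.filter (fun g : Fin n × Fin n → Bool =>
          ((PA A).card : ℝ)/2 + A.card * Real.sqrt (A.card * L)
            ≤ (((PA A).filter (fun p => g p)).card : ℝ)) →
        (fun p => !(g p)) ∈ Finset.univ.filter (fun g : Fin n × Fin n → Bool =>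
          (((PA A).filter (fun p => g p)).card : ℝ)
            ≤ ((PA A).card : ℝ)/2 - A.card * Real.sqrt (A.card * L)) := by
      intro g hg
      rw [Finset.mem_filter] at hg ⊢
      refine ⟨Finset.mem_univ _, ?_⟩
      have hXle := Finset.card_filter_le (PA A) (fun p => g p = true)
      have hcompl : (PA A).filter (fun p => (!(g p)) = true)
          = PA A \ (PA A).filter (fun p => g p = true) := by
        rw [← Finset.filter_not]
        apply Finset.filter_congr
        intro p _
        simp
      show ((((PA A).filter (fun p => (!(g p)) = true)).card : ℝ)) ≤ _
      rw [hcompl, Finset.card_sdiff_of_subset (Finset.filter_subset _ _), Nat.cast_sub hXle]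
      have h2 := hg.2
      have hNs : ((PA A).card : ℝ)/2 - A.card * Real.sqrt (A.card * L)
          = (PA A).card - (((PA A).card : ℝ)/2 + A.card * Real.sqrt (A.card * L)) := by ring
      rw [hNs]
      exact sub_le_sub_left h2 _
    have hinj : Set.InjOn (fun (g : Fin n × Fin n → Bool) (p : Fin n × Fin n) => !(g p))
        ((Finset.univ.filter (fun g : Fin n × Fin n → Bool =>
          ((PA A).card : ℝ)/2 + A.card * Real.sqrt (A.card * L)
            ≤ (((PA A).filter (fun p => g p)).card : ℝ))) : Finset _) := by
      intro g1 _ g2 _ h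
      funext p
      have hb := congrFun h p
      simp only at hb
      cases h1 : g1 p <;> cases h2 : g2 p <;> rw [h1, h2] at hb <;> simp_all
    exact_mod_cast Finset.card_le_card_of_injOn _ hmap hinj
  -- base estimate  n * exp (-4L) ≤ 1/18
  have hexp4 : (36:ℝ) ≤ Real.exp 4 := by
    have h4 : Real.exp 4 = Real.exp 1 ^ (4:ℕ) := by
      rw [← Real.exp_nat_mul]; norm_num
    rw [h4]
    have h1 : (2.7:ℝ) ≤ Real.exp 1 := by nlinarith [Real.exp_one_gt_d9]
    calc (36:ℝ) ≤ 2.7^(4:ℕ) := by norm_num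
      _ ≤ Real.exp 1 ^ (4:ℕ) := pow_le_pow_left₀ (by norm_num) h1 4
  have hbase : (n:ℝ) * Real.exp (-(4*L)) ≤ 1/18 := by
    have hneq : (n:ℝ) = Real.exp (Real.log 2 * L) := by
      rw [← Real.rpow_def_of_pos (by norm_num : (0:ℝ) < 2) L, hLdef]
      rw [Real.rpow_logb (by norm_num) (by norm_num) hnpos]
    rw [hneq, ← Real.exp_add]
    have hstep : Real.log 2 * L + -(4*L) ≤ Real.log 2 + -4 := by
      nlinarith [mul_nonneg (sub_nonneg.mpr hL)
        (by nlinarith [Real.log_two_lt_d9] : (0:ℝ) ≤ 4 - Real.log 2)]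
    calc Real.exp (Real.log 2 * L + -(4*L)) ≤ Real.exp (Real.log 2 + -4) :=
          Real.exp_le_exp.mpr hstep
      _ = 2 * Real.exp (-4) := by
          rw [Real.exp_add, Real.exp_log (by norm_num : (0:ℝ) < 2)]
      _ ≤ 1/18 := by
          rw [Real.exp_neg]
          have hpos := Real.exp_pos 4
          rw [show (1:ℝ)/18 = 2 * (1/36) by norm_num]
          apply mul_le_mul_of_nonneg_left _ (by norm_num)
          rw [inv_le_comm₀ hpos (by norm_num)]
          linarith
  have hterm : ∀ j : ℕ, (n.choose j : ℝ) * Real.exp (-(4*j*L)) ≤ (1/18)^j := by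
    intro j
    have hc : (n.choose j : ℝ) ≤ (n:ℝ)^j := by exact_mod_cast Nat.choose_le_pow n j
    have hexpj : Real.exp (-(4*(j:ℝ)*L)) = (Real.exp (-(4*L)))^j := by
      rw [← Real.exp_nat_mul]
      congr 1
      ring
    calc (n.choose j : ℝ) * Real.exp (-(4*j*L))
        ≤ (n:ℝ)^j * Real.exp (-(4*j*L)) := by
          apply mul_le_mul_of_nonneg_right hc (Real.exp_pos _).le
      _ = ((n:ℝ) * Real.exp (-(4*L)))^j := by rw [mul_pow, hexpj]
      _ ≤ (1/18)^j := pow_le_pow_left₀ (by positivity) hbase j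
  have hgeo : ∑ m ∈ Finset.range (n+1), (if 2 ≤ m then ((1:ℝ)/18)^m else 0) ≤ 1/306 := by
    have hfil : (Finset.range (n+1)).filter (fun m => 2 ≤ m) = Finset.Ico 2 (n+1) := by
      ext m
      simp [Finset.mem_filter, Finset.mem_range, Finset.mem_Ico, and_comm]
    rw [← Finset.sum_filter, hfil, Finset.sum_Ico_eq_sub _ (by omega)]
    rw [geom_sum_eq (show ((1:ℝ)/18) ≠ 1 by norm_num) (n+1)]
    rw [show ∑ m ∈ Finset.range 2, ((1:ℝ)/18)^m = 19/18 by
      rw [Finset.sum_range_succ, Finset.sum_range_one]; norm_num]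
    have hx0 : (0:ℝ) ≤ (1/18:ℝ)^(n+1) := by positivity
    have hd : ((1/18:ℝ)^(n+1) - 1)/((1/18:ℝ) - 1) ≤ 18/17 := by
      rw [div_le_iff_of_neg (by norm_num : ((1:ℝ)/18 - 1) < 0)]
      nlinarith
    linarith
  -- the bad set
  have hlt : (Finset.univ.filter (fun g : Fin n × Fin n → Bool =>
      ∃ A : Finset (Fin n), 2 ≤ A.card ∧
        ((((PA A).filter (fun p => g p)).card : ℝ)
            ≤ ((PA A).card : ℝ)/2 - A.card * Real.sqrt (A.card * L)
         ∨ ((PA A).card : ℝ)/2 + A.card * Real.sqrt (A.card * L)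
            ≤ (((PA A).filter (fun p => g p)).card : ℝ)))).card
      < Fintype.card ((Fin n × Fin n) → Bool) := by
    have hsub : Finset.univ.filter (fun g : Fin n × Fin n → Bool =>
        ∃ A : Finset (Fin n), 2 ≤ A.card ∧
          ((((PA A).filter (fun p => g p)).card : ℝ)
              ≤ ((PA A).card : ℝ)/2 - A.card * Real.sqrt (A.card * L)
           ∨ ((PA A).card : ℝ)/2 + A.card * Real.sqrt (A.card * L)
              ≤ (((PA A).filter (fun p => g p)).card : ℝ))) ⊆
        (Finset.univ.filter (fun A : Finset (Fin n) => 2 ≤ A.card)).biUnion (fun A =>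
          Finset.univ.filter (fun g : Fin n × Fin n → Bool =>
            (((PA A).filter (fun p => g p)).card : ℝ)
              ≤ ((PA A).card : ℝ)/2 - A.card * Real.sqrt (A.card * L))
          ∪ Finset.univ.filter (fun g : Fin n × Fin n → Bool =>
            ((PA A).card : ℝ)/2 + A.card * Real.sqrt (A.card * L)
              ≤ (((PA A).filter (fun p => g p)).card : ℝ))) := by
      intro g hg
      rw [Finset.mem_filter] at hg
      obtain ⟨-, A, hA, hcase⟩ := hg
      rw [Finset.mem_biUnion]
      refine ⟨A, Finset.mem_filter.mpr ⟨Finset.mem_univ _, hA⟩, ?_⟩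
      rw [Finset.mem_union]
      rcases hcase with h | h
      · exact Or.inl (Finset.mem_filter.mpr ⟨Finset.mem_univ _, h⟩)
      · exact Or.inr (Finset.mem_filter.mpr ⟨Finset.mem_univ _, h⟩)
    have hb1 : ((Finset.univ.filter (fun g : Fin n × Fin n → Bool =>
        ∃ A : Finset (Fin n), 2 ≤ A.card ∧
          ((((PA A).filter (fun p => g p)).card : ℝ)
              ≤ ((PA A).card : ℝ)/2 - A.card * Real.sqrt (A.card * L)
           ∨ ((PA A).card : ℝ)/2 + A.card * Real.sqrt (A.card * L)
              ≤ (((PA A).filter (fun p => g p)).card : ℝ)))).card : ℝ)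
        ≤ ∑ A ∈ Finset.univ.filter (fun A : Finset (Fin n) => 2 ≤ A.card),
            (2 * (2^(Fintype.card (Fin n × Fin n)) * Real.exp (-(4 * A.card * L)))) := by
      have h1 := le_trans (Finset.card_le_card hsub) (Finset.card_biUnion_le)
      have h1r : ((Finset.univ.filter (fun g : Fin n × Fin n → Bool =>
          ∃ A : Finset (Fin n), 2 ≤ A.card ∧
            ((((PA A).filter (fun p => g p)).card : ℝ)
                ≤ ((PA A).card : ℝ)/2 - A.card * Real.sqrt (A.card * L)
             ∨ ((PA A).card : ℝ)/2 + A.card * Real.sqrt (A.card * L)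
                ≤ (((PA A).filter (fun p => g p)).card : ℝ)))).card : ℝ)
          ≤ ∑ A ∈ Finset.univ.filter (fun A : Finset (Fin n) => 2 ≤ A.card),
              ((Finset.univ.filter (fun g : Fin n × Fin n → Bool =>
                (((PA A).filter (fun p => g p)).card : ℝ)
                  ≤ ((PA A).card : ℝ)/2 - A.card * Real.sqrt (A.card * L))
              ∪ Finset.univ.filter (fun g : Fin n × Fin n → Bool =>
                ((PA A).card : ℝ)/2 + A.card * Real.sqrt (A.card * L)
                  ≤ (((PA A).filter (fun p => g p)).card : ℝ))).card : ℝ) := by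
        exact_mod_cast h1
      refine le_trans h1r (Finset.sum_le_sum ?_)
      intro A hA'
      have hA2 : 2 ≤ A.card := (Finset.mem_filter.mp hA').2
      have hu := Finset.card_union_le
        (Finset.univ.filter (fun g : Fin n × Fin n → Bool =>
          (((PA A).filter (fun p => g p)).card : ℝ)
            ≤ ((PA A).card : ℝ)/2 - A.card * Real.sqrt (A.card * L)))
        (Finset.univ.filter (fun g : Fin n × Fin n → Bool =>
          ((PA A).card : ℝ)/2 + A.card * Real.sqrt (A.card * L)
            ≤ (((PA A).filter (fun p => g p)).card : ℝ)))
      have hur : ((Finset.univ.filter (fun g : Fin n × Fin n → Bool =>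
          (((PA A).filter (fun p => g p)).card : ℝ)
            ≤ ((PA A).card : ℝ)/2 - A.card * Real.sqrt (A.card * L))
          ∪ Finset.univ.filter (fun g : Fin n × Fin n → Bool =>
          ((PA A).card : ℝ)/2 + A.card * Real.sqrt (A.card * L)
            ≤ (((PA A).filter (fun p => g p)).card : ℝ))).card : ℝ)
          ≤ ((Finset.univ.filter (fun g : Fin n × Fin n → Bool =>
          (((PA A).filter (fun p => g p)).card : ℝ)
            ≤ ((PA A).card : ℝ)/2 - A.card * Real.sqrt (A.card * L))).card : ℝ)
          + ((Finset.univ.filter (fun g : Fin n × Fin n → Bool =>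
          ((PA A).card : ℝ)/2 + A.card * Real.sqrt (A.card * L)
            ≤ (((PA A).filter (fun p => g p)).card : ℝ))).card : ℝ) := by
        exact_mod_cast hu
      calc _ ≤ _ := hur
        _ ≤ 2^(Fintype.card (Fin n × Fin n)) * Real.exp (-(4 * A.card * L))
            + 2^(Fintype.card (Fin n × Fin n)) * Real.exp (-(4 * A.card * L)) :=
          add_le_add (low_count n hn L hL hLdef A hA2) (high_count A hA2)
        _ = 2 * (2^(Fintype.card (Fin n × Fin n)) * Real.exp (-(4 * A.card * L))) := by ring
    have hb2 : ∑ A ∈ Finset.univ.filter (fun A : Finset (Fin n) => 2 ≤ A.card),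
          (2 * (2^(Fintype.card (Fin n × Fin n)) * Real.exp (-(4 * A.card * L))))
        ≤ 2^(Fintype.card (Fin n × Fin n)) * (2 * (1/306)) := by
      rw [Finset.sum_filter, ← Finset.powerset_univ,
        Finset.sum_powerset_apply_card
          (f := fun m => if 2 ≤ m then
            2 * (2^(Fintype.card (Fin n × Fin n)) * Real.exp (-(4 * (m:ℝ) * L))) else 0),
        Finset.card_univ, Fintype.card_fin]
      have hstep : ∑ j ∈ Finset.range (n+1), n.choose j •
            (if 2 ≤ j then
              2 * (2^(Fintype.card (Fin n × Fin n)) * Real.exp (-(4 * (j:ℝ) * L))) else 0)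
          ≤ ∑ j ∈ Finset.range (n+1),
              2^(Fintype.card (Fin n × Fin n)) * (2 * (if 2 ≤ j then ((1:ℝ)/18)^j else 0)) := by
        apply Finset.sum_le_sum
        intro j _
        rw [nsmul_eq_mul]
        split_ifs with hj
        · have h3 := mul_le_mul_of_nonneg_left (hterm j)
            (by positivity : (0:ℝ) ≤ 2 * 2^(Fintype.card (Fin n × Fin n)))
          linarith [h3]
        · simp
      refine le_trans hstep ?_
      rw [← Finset.mul_sum, ← Finset.mul_sum]
      have h2 : (2:ℝ) * ∑ j ∈ Finset.range (n+1), (if 2 ≤ j then ((1:ℝ)/18)^j else 0)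
          ≤ 2 * (1/306) := by linarith [hgeo]
      apply mul_le_mul_of_nonneg_left h2 (by positivity)
    have hfun : Fintype.card ((Fin n × Fin n) → Bool) = 2^(Fintype.card (Fin n × Fin n)) := by
      rw [Fintype.card_fun, Fintype.card_bool]
    rw [hfun]
    have hTpos : (0:ℝ) < 2^(Fintype.card (Fin n × Fin n)) := by positivity
    have : ((Finset.univ.filter (fun g : Fin n × Fin n → Bool =>
        ∃ A : Finset (Fin n), 2 ≤ A.card ∧
          ((((PA A).filter (fun p => g p)).card : ℝ)
              ≤ ((PA A).card : ℝ)/2 - A.card * Real.sqrt (A.card * L)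
           ∨ ((PA A).card : ℝ)/2 + A.card * Real.sqrt (A.card * L)
              ≤ (((PA A).filter (fun p => g p)).card : ℝ)))).card : ℝ)
        < (2:ℝ)^(Fintype.card (Fin n × Fin n)) := by
      calc _ ≤ _ := le_trans hb1 hb2
        _ < (2:ℝ)^(Fintype.card (Fin n × Fin n)) := by nlinarith
    exact_mod_cast this
  obtain ⟨f, hf⟩ : ∃ f : Fin n × Fin n → Bool, ¬ (∃ A : Finset (Fin n), 2 ≤ A.card ∧
      ((((PA A).filter (fun p => f p)).card : ℝ)
          ≤ ((PA A).card : ℝ)/2 - A.card * Real.sqrt (A.card * L)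
       ∨ ((PA A).card : ℝ)/2 + A.card * Real.sqrt (A.card * L)
          ≤ (((PA A).filter (fun p => f p)).card : ℝ))) := by
    by_contra hco
    push_neg at hco
    have heq : Finset.univ.filter (fun g : Fin n × Fin n → Bool =>
        ∃ A : Finset (Fin n), 2 ≤ A.card ∧
          ((((PA A).filter (fun p => g p)).card : ℝ)
              ≤ ((PA A).card : ℝ)/2 - A.card * Real.sqrt (A.card * L)
           ∨ ((PA A).card : ℝ)/2 + A.card * Real.sqrt (A.card * L)
              ≤ (((PA A).filter (fun p => g p)).card : ℝ))) = Finset.univ := by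
      apply Finset.filter_true_of_mem
      intro g _
      exact hco g
    rw [heq, Finset.card_univ] at hlt
    exact lt_irrefl _ hlt
  push_neg at hf
  exact ⟨f, hf⟩

/-- For any `n ≥ 2` there is an `n`-vertex graph in which, for every `r ≥ 2`, every
subset of `⌈2^(r+8)·log₂ n⌉` vertices contains both a clique and an independent set
of size `r`. -/
theorem exists_locally_ramsey_graph (n : ℕ) (hn : 2 ≤ n) :
    ∃ G : SimpleGraph (Fin n), ∀ r : ℕ, 2 ≤ r →
      ∀ A : Finset (Fin n), ⌈(2 : ℝ) ^ (r + 8) * Real.logb 2 n⌉₊ ≤ A.card →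
        (∃ K ⊆ A, G.IsNClique r K) ∧ (∃ K ⊆ A, (Gᶜ).IsNClique r K) := by
  classical
  obtain ⟨f, hf⟩ := exists_good n hn
  have hnpos : (0:ℝ) < (n:ℝ) := by
    have : 0 < n := by omega
    exact_mod_cast this
  have hL : 1 ≤ Real.logb 2 n := by
    rw [Real.le_logb_iff_rpow_le (by norm_num) hnpos, Real.rpow_one]
    exact_mod_cast hn
  refine ⟨mkGraph f, ?_⟩
  intro r hr A hA
  have hd1 : ∀ B : Finset (Fin n), 2 ≤ B.card →
      ((B.card : ℝ) * B.card - B.card) / 2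
        - 2 * B.card * Real.sqrt (B.card * Real.logb 2 n) ≤ (e2 (mkGraph f) B : ℝ) := by
    intro B hB
    obtain ⟨hlow, hhigh⟩ := hf B hB
    have hNr : 2*((PA B).card:ℝ) + B.card = B.card * B.card := by exact_mod_cast PA_card B
    have he2 : (e2 (mkGraph f) B : ℝ) = 2*(((PA B).filter (fun p => f p)).card:ℝ) := by
      exact_mod_cast e2_mkGraph f B
    linarith
  have hd2 : ∀ B : Finset (Fin n), 2 ≤ B.card →
      ((B.card : ℝ) * B.card - B.card) / 2
        - 2 * B.card * Real.sqrt (B.card * Real.logb 2 n) ≤ (e2 ((mkGraph f)ᶜ) B : ℝ) := by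
    intro B hB
    obtain ⟨hlow, hhigh⟩ := hf B hB
    have hNr : 2*((PA B).card:ℝ) + B.card = B.card * B.card := by exact_mod_cast PA_card B
    have he2 : (e2 (mkGraph f) B : ℝ) = 2*(((PA B).filter (fun p => f p)).card:ℝ) := by
      exact_mod_cast e2_mkGraph f B
    have hcompl : (e2 (mkGraph f) B : ℝ) + (e2 ((mkGraph f)ᶜ) B : ℝ) + B.card
        = B.card * B.card := by exact_mod_cast e2_compl (mkGraph f) B
    linarith
  have hAcard : ((2:ℝ) ^ (r+8) - 15 * (Real.sqrt 2) ^ (r+8)) * Real.logb 2 n ≤ A.card := by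
    have h1 : ((2:ℝ)^(r+8) * Real.logb 2 n) ≤ (A.card : ℝ) := by
      refine le_trans (Nat.le_ceil _) ?_
      exact_mod_cast hA
    have h2 : (0:ℝ) ≤ 15 * (Real.sqrt 2)^(r+8) * Real.logb 2 n := by positivity
    nlinarith
  constructor
  · exact greedy (mkGraph f) (Real.logb 2 n) hL hd1 r (by omega) A hAcard
  · exact greedy ((mkGraph f)ᶜ) (Real.logb 2 n) hL hd2 r (by omega) A hAcard
end

section
/- Suppose there exists an n-vertex graph (n ≥ 2) in which every subset of m vertices contains both a clique and an independent set of size r, where r ≥ 16·log₂ n. Then there exists an n-vertex graph G' such that: (1) G' contains no clique and no independent set of size r/2; and (2) every subset of m vertices of G' contains both a clique and an independent set of size r/(17·log₂ n). -/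
set_option maxHeartbeats 1000000

open Finset

namespace Scramble

lemma sum_union_le {α : Type*} [DecidableEq α] (s t : Finset α) (f : α → ℝ)
    (hf : ∀ a, 0 ≤ f a) : ∑ a ∈ s ∪ t, f a ≤ ∑ a ∈ s, f a + ∑ a ∈ t, f a := by
  have h := Finset.sum_union_inter (s₁ := s) (s₂ := t) (f := f)
  have : 0 ≤ ∑ a ∈ s ∩ t, f a := Finset.sum_nonneg fun a _ => hf a
  linarith

lemma sum_biUnion_le {ι α : Type*} [DecidableEq α] (s : Finset ι) (t : ι → Finset α)
    (f : α → ℝ) (hf : ∀ a, 0 ≤ f a) :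
    ∑ a ∈ s.biUnion t, f a ≤ ∑ i ∈ s, ∑ a ∈ t i, f a := by
  classical
  induction s using Finset.induction with
  | empty => simp
  | insert _ _ hx ih =>
    rename_i i s'
    rw [Finset.biUnion_insert, Finset.sum_insert hx]
    exact (sum_union_le _ _ f hf).trans (by linarith)

/-- Pairs `(i,j)` with `i < j`, both in `S`. -/
def pairs {α : Type*} [LinearOrder α] [DecidableEq α] (S : Finset α) : Finset (α × α) :=
  (S ×ˢ S).filter fun q => q.1 < q.2

lemma mem_pairs {α : Type*} [LinearOrder α] [DecidableEq α] {S : Finset α} {q : α × α} :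
    q ∈ pairs S ↔ q.1 ∈ S ∧ q.2 ∈ S ∧ q.1 < q.2 := by
  simp [pairs, Finset.mem_filter, Finset.mem_product, and_assoc]

lemma pairs_mono {α : Type*} [LinearOrder α] [DecidableEq α] {S T : Finset α}
    (h : S ⊆ T) : pairs S ⊆ pairs T := by
  intro q hq
  rw [mem_pairs] at hq ⊢
  exact ⟨h hq.1, h hq.2.1, hq.2.2⟩

lemma card_pairs {α : Type*} [LinearOrder α] [DecidableEq α] (S : Finset α) :
    (pairs S).card * 2 = S.card * S.card - S.card := by
  classical
  have hsplit : S.offDiag = pairs S ∪ (S ×ˢ S).filter fun q => q.2 < q.1 := by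
    ext q
    simp only [Finset.mem_offDiag, pairs, Finset.mem_union, Finset.mem_filter,
      Finset.mem_product]
    constructor
    · rintro ⟨h1, h2, h3⟩
      rcases lt_or_gt_of_ne h3 with h | h
      · exact Or.inl ⟨⟨h1, h2⟩, h⟩
      · exact Or.inr ⟨⟨h1, h2⟩, h⟩
    · rintro (⟨⟨h1, h2⟩, h⟩ | ⟨⟨h1, h2⟩, h⟩)
      · exact ⟨h1, h2, ne_of_lt h⟩
      · exact ⟨h1, h2, (ne_of_lt h).symm⟩
  have hdisj : Disjoint (pairs S) ((S ×ˢ S).filter fun q => q.2 < q.1) := by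
    rw [Finset.disjoint_left]
    intro q hq hq'
    rw [mem_pairs] at hq
    rw [Finset.mem_filter] at hq'
    exact absurd hq' (by push_neg; intro _; exact le_of_lt hq.2.2)
  have hcard2 : ((S ×ˢ S).filter fun q => q.2 < q.1).card = (pairs S).card := by
    apply (Finset.card_nbij (i := Prod.swap) ?_ ?_ ?_).symm
    · intro q hq
      rw [Finset.mem_coe, mem_pairs] at hq
      rw [Finset.mem_coe, Finset.mem_filter, Finset.mem_product]
      exact ⟨⟨hq.2.1, hq.1⟩, hq.2.2⟩
    · intro a _ b _ hab
      exact Prod.swap_injective hab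
    · intro q hq
      rw [Finset.mem_coe, Finset.mem_filter, Finset.mem_product] at hq
      rw [Set.mem_image]
      refine ⟨q.swap, ?_, Prod.swap_swap q⟩
      rw [Finset.mem_coe, mem_pairs]
      exact ⟨hq.1.2, hq.1.1, hq.2⟩
  have := Finset.card_union_of_disjoint hdisj
  rw [← hsplit, Finset.offDiag_card, hcard2] at this
  omega

end Scramble

namespace Scramble

variable {α : Type*} [LinearOrder α] [DecidableEq α]

/-- Number of pairs in `P` involving `v`. -/
def deg (P : Finset (α × α)) (v : α) : ℕ := (P.filter fun q => q.1 = v ∨ q.2 = v).card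

lemma deg_mono {P P' : Finset (α × α)} (h : P' ⊆ P) (v : α) : deg P' v ≤ deg P v :=
  Finset.card_le_card (Finset.filter_subset_filter _ h)

lemma caro_wei (N : ℕ) : ∀ (S : Finset α) (P : Finset (α × α)),
    (∀ q ∈ P, q.1 ∈ S ∧ q.2 ∈ S ∧ q.1 < q.2) → S.card ≤ N →
    ∃ K ⊆ S, (∀ i ∈ K, ∀ j ∈ K, (i, j) ∉ P) ∧
      ∑ v ∈ S, (1 : ℝ) / (deg P v + 1) ≤ K.card := by
  induction N with
  | zero =>
    intro S P hP hcard
    refine ⟨∅, Finset.empty_subset _, by simp, ?_⟩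
    rw [Finset.card_eq_zero.mp (Nat.le_zero.mp hcard)]
    simp
  | succ N ih =>
    intro S P hP hcard
    rcases S.eq_empty_or_nonempty with rfl | hne
    · exact ⟨∅, Finset.empty_subset _, by simp, by simp⟩
    obtain ⟨v, hvS, hvmin⟩ := Finset.exists_min_image S (deg P) hne
    set nbrs := S.filter (fun u => (v, u) ∈ P ∨ (u, v) ∈ P) with hnbrs
    set closed := insert v nbrs with hclosed
    have hclosedS : closed ⊆ S := by
      rw [hclosed, Finset.insert_subset_iff]
      exact ⟨hvS, Finset.filter_subset _ _⟩
    set S' := S \ closed with hS'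
    set P' := P.filter (fun q => q.1 ∈ S' ∧ q.2 ∈ S') with hP'def
    have hP' : ∀ q ∈ P', q.1 ∈ S' ∧ q.2 ∈ S' ∧ q.1 < q.2 := by
      intro q hq
      rw [hP'def, Finset.mem_filter] at hq
      exact ⟨hq.2.1, hq.2.2, (hP q hq.1).2.2⟩
    have hvnotS' : v ∉ S' := by
      rw [hS']
      simp [hclosed]
    have hS'card : S'.card ≤ N := by
      have : S'.card < S.card := Finset.card_lt_card ⟨Finset.sdiff_subset, by
        intro hsub
        exact hvnotS' (hsub hvS)⟩
      omega
    obtain ⟨K', hK'S', hK'free, hK'sum⟩ := ih S' P' hP' hS'card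
    have hvK' : v ∉ K' := fun h => hvnotS' (hK'S' h)
    refine ⟨insert v K', ?_, ?_, ?_⟩
    · rw [Finset.insert_subset_iff]
      exact ⟨hvS, hK'S'.trans Finset.sdiff_subset⟩
    · -- pair-freeness
      intro i hi j hj hij
      rw [Finset.mem_insert] at hi hj
      have hiS' : i = v ∨ i ∈ S' := hi.imp id (fun h => hK'S' h)
      have hjS' : j = v ∨ j ∈ S' := hj.imp id (fun h => hK'S' h)
      have hij1 := (hP _ hij).1
      have hij2 := (hP _ hij).2.1
      have hijlt := (hP _ hij).2.2
      rcases hiS' with rfl | hiS'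
      · rcases hjS' with rfl | hjS'
        · exact absurd hijlt (lt_irrefl _)
        · -- (v, j) ∈ P, j ∈ S'
          have : j ∈ nbrs := by
            rw [hnbrs, Finset.mem_filter]
            exact ⟨hij2, Or.inl hij⟩
          rw [hS', Finset.mem_sdiff] at hjS'
          exact hjS'.2 (by rw [hclosed]; exact Finset.mem_insert_of_mem this)
      · rcases hjS' with rfl | hjS'
        · have : i ∈ nbrs := by
            rw [hnbrs, Finset.mem_filter]
            exact ⟨hij1, Or.inr hij⟩
          rw [hS', Finset.mem_sdiff] at hiS'
          exact hiS'.2 (by rw [hclosed]; exact Finset.mem_insert_of_mem this)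
        · -- both in S'
          have : (i, j) ∈ P' := by
            rw [hP'def, Finset.mem_filter]
            exact ⟨hij, hiS', hjS'⟩
          rcases hi with rfl | hi
          · exact absurd hiS' hvnotS'
          rcases hj with rfl | hj
          · exact absurd hjS' hvnotS'
          exact hK'free i hi j hj this
    · -- the sum bound
      have hsplit : ∑ u ∈ S, (1 : ℝ) / (deg P u + 1)
          = ∑ u ∈ S', (1 : ℝ) / (deg P u + 1) + ∑ u ∈ closed, (1 : ℝ) / (deg P u + 1) := by
        rw [hS', Finset.sum_sdiff hclosedS]
      have hclosed_card : closed.card ≤ deg P v + 1 := by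
        have hnb : nbrs.card ≤ deg P v := by
          apply Finset.card_le_card_of_injOn
            (fun u => if (v, u) ∈ P then (v, u) else (u, v))
          · intro u hu
            simp only [Finset.mem_coe] at hu ⊢
            simp only [hnbrs, Finset.mem_filter] at hu
            by_cases h : (v, u) ∈ P
            · rw [if_pos h, Finset.mem_filter]
              exact ⟨h, Or.inl rfl⟩
            · rw [if_neg h, Finset.mem_filter]
              exact ⟨hu.2.resolve_left h, Or.inr rfl⟩
          · intro a _ b _ hab
            dsimp only at hab
            by_cases ha : (v, a) ∈ P <;> by_cases hb : (v, b) ∈ P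
            · rw [if_pos ha, if_pos hb, Prod.mk.injEq] at hab
              exact hab.2
            · rw [if_pos ha, if_neg hb, Prod.mk.injEq] at hab
              exact hab.2.trans hab.1
            · rw [if_neg ha, if_pos hb, Prod.mk.injEq] at hab
              exact hab.1.trans hab.2
            · rw [if_neg ha, if_neg hb, Prod.mk.injEq] at hab
              exact hab.1
        calc closed.card ≤ nbrs.card + 1 := Finset.card_insert_le _ _
          _ ≤ deg P v + 1 := by omega
      have hclosed_sum : ∑ u ∈ closed, (1 : ℝ) / (deg P u + 1) ≤ 1 := by
        have h1 : ∀ u ∈ closed, (1 : ℝ) / (deg P u + 1) ≤ 1 / (deg P v + 1) := by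
          intro u hu
          apply one_div_le_one_div_of_le
          · positivity
          · have := hvmin u (hclosedS hu)
            push_cast
            have h2 : (deg P v : ℝ) ≤ (deg P u : ℝ) := Nat.cast_le.mpr this
            linarith
        calc ∑ u ∈ closed, (1 : ℝ) / (deg P u + 1)
            ≤ ∑ _u ∈ closed, (1 : ℝ) / (deg P v + 1) := Finset.sum_le_sum h1
          _ = closed.card * ((1 : ℝ) / (deg P v + 1)) := by
              rw [Finset.sum_const, nsmul_eq_mul]
          _ ≤ (deg P v + 1) * ((1 : ℝ) / (deg P v + 1)) := by
              apply mul_le_mul_of_nonneg_right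
              · push_cast
                have := (Nat.cast_le (α := ℝ)).mpr hclosed_card
                push_cast at this
                linarith
              · positivity
          _ = 1 := by
              field_simp
      have hS'sum : ∑ u ∈ S', (1 : ℝ) / (deg P u + 1)
          ≤ ∑ u ∈ S', (1 : ℝ) / (deg P' u + 1) := by
        apply Finset.sum_le_sum
        intro u _
        apply one_div_le_one_div_of_le
        · positivity
        · have := deg_mono (Finset.filter_subset _ P) u (P' := P')
          push_cast
          have h2 : (deg P' u : ℝ) ≤ (deg P u : ℝ) := Nat.cast_le.mpr this
          linarith
      rw [hsplit, Finset.card_insert_of_notMem hvK']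
      push_cast
      linarith

lemma turan (S : Finset α) (P : Finset (α × α))
    (hP : ∀ q ∈ P, q.1 ∈ S ∧ q.2 ∈ S ∧ q.1 < q.2) :
    ∃ K ⊆ S, (∀ i ∈ K, ∀ j ∈ K, (i, j) ∉ P) ∧
      (S.card : ℝ) ^ 2 ≤ K.card * (S.card + 2 * P.card) := by
  obtain ⟨K, hKS, hKfree, hKsum⟩ := caro_wei S.card S P hP le_rfl
  refine ⟨K, hKS, hKfree, ?_⟩
  have hdegsum : ∑ v ∈ S, deg P v ≤ 2 * P.card := by
    have h1 : ∀ v, deg P v = ∑ q ∈ P, if q.1 = v ∨ q.2 = v then 1 else 0 := by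
      intro v
      rw [deg, Finset.card_filter]
    calc ∑ v ∈ S, deg P v = ∑ q ∈ P, ∑ v ∈ S, if q.1 = v ∨ q.2 = v then 1 else 0 := by
          simp_rw [h1]; rw [Finset.sum_comm]
      _ ≤ ∑ _q ∈ P, 2 := by
          apply Finset.sum_le_sum
          intro q _
          have : (S.filter fun v => q.1 = v ∨ q.2 = v) ⊆ {q.1, q.2} := by
            intro v hv
            rw [Finset.mem_filter] at hv
            rw [Finset.mem_insert, Finset.mem_singleton]
            exact hv.2.imp Eq.symm Eq.symm
          calc (∑ v ∈ S, if q.1 = v ∨ q.2 = v then 1 else 0)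
              = (S.filter fun v => q.1 = v ∨ q.2 = v).card := (Finset.card_filter _ _).symm
            _ ≤ ({q.1, q.2} : Finset α).card := Finset.card_le_card this
            _ ≤ 2 := Finset.card_insert_le _ _ |>.trans (by simp)
      _ = 2 * P.card := by rw [Finset.sum_const, smul_eq_mul, mul_comm]
  have hCS : (S.card : ℝ) ^ 2 ≤ (∑ v ∈ S, ((deg P v : ℝ) + 1)) *
      ∑ v ∈ S, (1 : ℝ) / (deg P v + 1) := by
    have := Finset.sum_mul_sq_le_sq_mul_sq S
      (fun v => Real.sqrt ((deg P v : ℝ) + 1)) (fun v => 1 / Real.sqrt ((deg P v : ℝ) + 1))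
    have he : ∀ v ∈ S, Real.sqrt ((deg P v : ℝ) + 1) * (1 / Real.sqrt ((deg P v : ℝ) + 1)) = 1 := by
      intro v _
      have : Real.sqrt ((deg P v : ℝ) + 1) ≠ 0 := by positivity
      field_simp
    rw [Finset.sum_congr rfl he] at this
    simp only [Finset.sum_const, nsmul_eq_mul, mul_one] at this
    have e1 : ∑ v ∈ S, Real.sqrt ((deg P v : ℝ) + 1) ^ 2 = ∑ v ∈ S, ((deg P v : ℝ) + 1) :=
      Finset.sum_congr rfl fun v _ => Real.sq_sqrt (by positivity)
    have e2 : ∑ v ∈ S, (1 / Real.sqrt ((deg P v : ℝ) + 1)) ^ 2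
        = ∑ v ∈ S, (1 : ℝ) / (deg P v + 1) :=
      Finset.sum_congr rfl fun v _ => by rw [div_pow, one_pow, Real.sq_sqrt (by positivity)]
    exact this.trans (le_of_eq (by rw [e1, e2]))
  have hdegsum' : (∑ v ∈ S, ((deg P v : ℝ) + 1)) ≤ S.card + 2 * P.card := by
    rw [Finset.sum_add_distrib, Finset.sum_const, nsmul_eq_mul, mul_one]
    have : (∑ v ∈ S, (deg P v : ℝ)) ≤ 2 * P.card := by
      push_cast [← Nat.cast_sum]
      exact_mod_cast hdegsum
    linarith
  have hsum_nonneg : (0:ℝ) ≤ ∑ v ∈ S, (1 : ℝ) / (deg P v + 1) :=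
    Finset.sum_nonneg fun v _ => by positivity
  calc (S.card : ℝ) ^ 2 ≤ (∑ v ∈ S, ((deg P v : ℝ) + 1)) *
      ∑ v ∈ S, (1 : ℝ) / (deg P v + 1) := hCS
    _ ≤ ((S.card : ℝ) + 2 * P.card) * (K.card : ℝ) := by
        apply mul_le_mul hdegsum' hKsum hsum_nonneg (by positivity)
    _ = K.card * (S.card + 2 * P.card) := by ring
end Scramble

namespace Scramble

section Prob
variable {β : Type*} [DecidableEq β]

/-- product Bernoulli weight of an outcome `ω ⊆ E`. -/
def W (E : Finset β) (p : ℝ) (ω : Finset β) : ℝ :=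
  (∏ _e ∈ ω, p) * ∏ _e ∈ E \ ω, (1 - p)

lemma W_nonneg {E : Finset β} {p : ℝ} (hp0 : 0 ≤ p) (hp1 : p ≤ 1) (ω : Finset β) :
    0 ≤ W E p ω := by
  apply mul_nonneg
  · exact Finset.prod_nonneg fun _ _ => hp0
  · exact Finset.prod_nonneg fun _ _ => by linarith

lemma sum_W_mul (E : Finset β) (p : ℝ) (f : β → Bool → ℝ) :
    ∑ ω ∈ E.powerset, W E p ω * ∏ e ∈ E, (if e ∈ ω then f e true else f e false)
      = ∏ e ∈ E, (p * f e true + (1 - p) * f e false) := by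
  rw [Finset.prod_add]
  apply Finset.sum_congr rfl
  intro ω hω
  rw [Finset.mem_powerset] at hω
  have hsplit : (∏ e ∈ E, if e ∈ ω then f e true else f e false)
      = (∏ e ∈ ω, f e true) * ∏ e ∈ E \ ω, f e false := by
    rw [← Finset.prod_sdiff hω]
    rw [mul_comm]
    congr 1
    · apply Finset.prod_congr rfl
      intro e he
      rw [if_pos he]
    · apply Finset.prod_congr rfl
      intro e he
      rw [if_neg (Finset.mem_sdiff.mp he).2]
  rw [hsplit, W, Finset.prod_mul_distrib, Finset.prod_mul_distrib]
  ring

lemma sum_W (E : Finset β) (p : ℝ) : ∑ ω ∈ E.powerset, W E p ω = 1 := by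
  have h := sum_W_mul E p (fun _ _ => 1)
  simp only [mul_one, ite_self, Finset.prod_const_one, add_sub_cancel] at h
  exact h

lemma prob_le (E : Finset β) (p : ℝ) (hp0 : 0 ≤ p) (hp1 : p ≤ 1) (f : β → Bool → ℝ)
    (hf : ∀ e b, 0 ≤ f e b) (B : Finset (Finset β)) (hB : B ⊆ E.powerset) (t : ℝ)
    (h1 : ∀ ω ∈ B, t ≤ ∏ e ∈ E, (if e ∈ ω then f e true else f e false)) :
    t * ∑ ω ∈ B, W E p ω ≤ ∏ e ∈ E, (p * f e true + (1 - p) * f e false) := by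
  have step1 : t * ∑ ω ∈ B, W E p ω
      ≤ ∑ ω ∈ B, W E p ω * ∏ e ∈ E, (if e ∈ ω then f e true else f e false) := by
    rw [Finset.mul_sum]
    apply Finset.sum_le_sum
    intro ω hω
    calc t * W E p ω = W E p ω * t := mul_comm _ _
      _ ≤ _ := mul_le_mul_of_nonneg_left (h1 ω hω) (W_nonneg hp0 hp1 ω)
  have step2 : ∑ ω ∈ B, W E p ω * ∏ e ∈ E, (if e ∈ ω then f e true else f e false)
      ≤ ∑ ω ∈ E.powerset, W E p ω * ∏ e ∈ E, (if e ∈ ω then f e true else f e false) := by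
    apply Finset.sum_le_sum_of_subset_of_nonneg hB
    intro ω _ _
    apply mul_nonneg (W_nonneg hp0 hp1 ω)
    apply Finset.prod_nonneg
    intro e _
    split <;> apply hf
  calc _ ≤ _ := step1
    _ ≤ _ := step2
    _ = _ := sum_W_mul E p f

end Prob
end Scramble

namespace Scramble

variable {β : Type*} [DecidableEq β]

lemma pattern_bound (E T pat : Finset β) (hTE : T ⊆ E) (hpat : pat ⊆ T)
    (p : ℝ) (hp0 : 0 ≤ p) (hp1 : p ≤ 1/2) :
    ∑ ω ∈ E.powerset.filter (fun ω => ω ∩ T = pat), W E p ω ≤ (1-p)^T.card := by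
  set f : β → Bool → ℝ := fun e v =>
    match v with
    | true => if e ∈ T then (if e ∈ pat then 1 else 0) else 1
    | false => if e ∈ T then (if e ∈ pat then 0 else 1) else 1
    with hfdef
  have hftrue : ∀ e, f e true = if e ∈ T then (if e ∈ pat then 1 else 0) else 1 := fun e => rfl
  have hffalse : ∀ e, f e false = if e ∈ T then (if e ∈ pat then 0 else 1) else 1 := fun e => rfl
  have hf : ∀ e v, 0 ≤ f e v := by
    intro e v
    cases v
    · rw [hffalse e]; split_ifs <;> norm_num
    · rw [hftrue e]; split_ifs <;> norm_num
  have h1 : ∀ ω ∈ E.powerset.filter (fun ω => ω ∩ T = pat),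
      (1:ℝ) ≤ ∏ e ∈ E, (if e ∈ ω then f e true else f e false) := by
    intro ω hω
    rw [Finset.mem_filter] at hω
    apply le_of_eq
    symm
    apply Finset.prod_eq_one
    intro e _
    by_cases heω : e ∈ ω
    · rw [if_pos heω, hftrue e]
      by_cases heT : e ∈ T
      · rw [if_pos heT, if_pos]
        rw [← hω.2]
        exact Finset.mem_inter.mpr ⟨heω, heT⟩
      · rw [if_neg heT]
    · rw [if_neg heω, hffalse e]
      by_cases heT : e ∈ T
      · rw [if_pos heT, if_neg]
        intro hepat
        rw [← hω.2] at hepat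
        exact heω (Finset.mem_inter.mp hepat).1
      · rw [if_neg heT]
  have hmain := prob_le E p hp0 (by linarith) f hf _ (Finset.filter_subset _ _) 1 h1
  rw [one_mul] at hmain
  refine hmain.trans ?_
  rw [← Finset.prod_sdiff hTE]
  have hout : ∏ e ∈ E \ T, (p * f e true + (1 - p) * f e false) = 1 := by
    apply Finset.prod_eq_one
    intro e he
    have heT : e ∉ T := (Finset.mem_sdiff.mp he).2
    rw [hftrue e, hffalse e, if_neg heT, if_neg heT]
    ring
  rw [hout, one_mul]
  calc ∏ e ∈ T, (p * f e true + (1 - p) * f e false)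
      ≤ ∏ _e ∈ T, (1 - p) := by
        apply Finset.prod_le_prod
        · intro e he
          rw [hftrue e, hffalse e, if_pos he, if_pos he]
          split_ifs <;> linarith
        · intro e he
          rw [hftrue e, hffalse e, if_pos he, if_pos he]
          split_ifs <;> linarith
    _ = (1-p)^T.card := Finset.prod_const _

lemma count_bound (E T : Finset β) (hTE : T ⊆ E) (b : ℕ)
    (p : ℝ) (hp0 : 0 ≤ p) (hp1 : p ≤ 1/2) :
    (2:ℝ)^b * ∑ ω ∈ E.powerset.filter (fun ω => b ≤ (ω ∩ T).card), W E p ω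
      ≤ (1+p)^T.card := by
  set f : β → Bool → ℝ := fun e v =>
    match v with
    | true => if e ∈ T then 2 else 1
    | false => 1
    with hfdef
  have hftrue : ∀ e, f e true = if e ∈ T then 2 else 1 := fun e => rfl
  have hffalse : ∀ e, f e false = 1 := fun e => rfl
  have hf : ∀ e v, 0 ≤ f e v := by
    intro e v
    cases v
    · rw [hffalse e]; norm_num
    · rw [hftrue e]; split_ifs <;> norm_num
  have h1 : ∀ ω ∈ E.powerset.filter (fun ω => b ≤ (ω ∩ T).card),
      (2:ℝ)^b ≤ ∏ e ∈ E, (if e ∈ ω then f e true else f e false) := by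
    intro ω hω
    rw [Finset.mem_filter, Finset.mem_powerset] at hω
    have hsplit : ∏ e ∈ E, (if e ∈ ω then f e true else f e false)
        = ∏ e ∈ ω, f e true := by
      have h0 : ∀ e ∈ E, (if e ∈ ω then f e true else f e false)
          = (if e ∈ ω then f e true else 1) := by
        intro e _
        by_cases h : e ∈ ω
        · rw [if_pos h]
        · rw [if_neg h, hffalse e]
      rw [Finset.prod_congr rfl h0, Finset.prod_ite_mem E ω (fun e => f e true),
        Finset.inter_eq_right.mpr hω.1]
    have hpow : ∏ e ∈ ω, f e true = (2:ℝ)^((ω ∩ T).card) := by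
      calc ∏ e ∈ ω, f e true = ∏ e ∈ ω, (if e ∈ T then (2:ℝ) else 1) :=
            Finset.prod_congr rfl fun e _ => hftrue e
        _ = ∏ e ∈ ω ∩ T, (2:ℝ) := Finset.prod_ite_mem ω T (fun _ => (2:ℝ))
        _ = (2:ℝ)^((ω ∩ T).card) := Finset.prod_const _
    rw [hsplit, hpow]
    exact pow_le_pow_right₀ (by norm_num) hω.2
  have hmain := prob_le E p hp0 (by linarith) f hf _ (Finset.filter_subset _ _) ((2:ℝ)^b) h1
  refine hmain.trans ?_
  rw [← Finset.prod_sdiff hTE]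
  have hout : ∏ e ∈ E \ T, (p * f e true + (1 - p) * f e false) = 1 := by
    apply Finset.prod_eq_one
    intro e he
    have heT : e ∉ T := (Finset.mem_sdiff.mp he).2
    rw [hftrue e, hffalse e, if_neg heT]
    ring
  rw [hout, one_mul]
  apply le_of_eq
  calc ∏ e ∈ T, (p * f e true + (1 - p) * f e false)
      = ∏ _e ∈ T, (1 + p) := by
        apply Finset.prod_congr rfl
        intro e he
        rw [hftrue e, hffalse e, if_pos he]
        ring
    _ = (1+p)^T.card := Finset.prod_const _

end Scramble

namespace Scramble

lemma exp_three_gt : (8:ℝ) ≤ Real.exp 3 := by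
  have h := Real.exp_one_gt_d9
  have h3 : Real.exp 3 = (Real.exp 1)^(3:ℕ) := by
    rw [← Real.exp_nat_mul]
    norm_num
  rw [h3]
  have h2 : (2.7182818283:ℝ)^(3:ℕ) ≤ (Real.exp 1)^(3:ℕ) :=
    pow_le_pow_left₀ (by norm_num) h.le 3
  have : (8:ℝ) ≤ (2.7182818283:ℝ)^(3:ℕ) := by norm_num
  linarith

lemma two_exp_le (x : ℝ) (hx : x ≤ -3) : 2 * Real.exp x ≤ 1/4 := by
  have h1 : Real.exp x ≤ Real.exp (-3) := Real.exp_le_exp.mpr hx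
  have h2 : Real.exp (-3) = 1 / Real.exp 3 := by
    rw [Real.exp_neg]; exact inv_eq_one_div _
  have h3 := exp_three_gt
  have h4 : Real.exp (-3) ≤ 1/8 := by
    rw [h2]
    apply div_le_div_of_nonneg_left (by norm_num) (by norm_num) h3
  linarith

lemma num1 (L r : ℝ) (n k M : ℕ) (hL : 1 ≤ L) (hr : 16*L ≤ r)
    (hn : 0 < n) (hlogn : Real.log n = L * Real.log 2)
    (hk : r/2 ≤ (k:ℝ)) (hM : (M:ℝ)*2 = (k:ℝ)*k - k) :
    (n:ℝ)^k * (2*(1 - 8*L/r)^M) ≤ 1/4 := by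
  have hr0 : (0:ℝ) < r := by linarith
  set p : ℝ := 8*L/r with hp
  have hp0 : 0 < p := by apply div_pos <;> linarith
  have hp2 : p ≤ 1/2 := by rw [hp, div_le_iff₀ hr0]; linarith
  have h1p : (0:ℝ) ≤ 1 - p := by linarith
  have e1 : (1 - p)^M ≤ Real.exp (-(p*(M:ℝ))) := by
    calc (1-p)^M ≤ (Real.exp (-p))^M := by
          apply pow_le_pow_left₀ h1p
          linarith [Real.add_one_le_exp (-p)]
      _ = Real.exp ((M:ℕ) * (-p)) := (Real.exp_nat_mul _ M).symm
      _ = Real.exp (-(p*M)) := by ring_nf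
  have hn' : (0:ℝ) < (n:ℝ) := by exact_mod_cast hn
  have e2 : (n:ℝ)^k = Real.exp ((k:ℕ) * (L * Real.log 2)) := by
    rw [← hlogn, ← Real.exp_log hn', ← Real.exp_nat_mul, Real.exp_log hn']
  have hk8 : (8:ℝ) ≤ (k:ℝ) := by linarith
  have hk0 : (0:ℝ) ≤ (k:ℝ) := by linarith
  have hpM : p * M = 4*L*((k:ℝ)*k - k)/r := by
    have hM' : (M:ℝ) = ((k:ℝ)*k - k)/2 := by linarith
    rw [hp, hM']
    ring
  have hkk : (k:ℝ)*k - k ≥ (k:ℝ)*(r/2 - 1) := by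
    have : (k:ℝ)*k - k = k*((k:ℝ) - 1) := by ring
    rw [this]
    apply mul_le_mul_of_nonneg_left (by linarith) hk0
  have hpM2 : 2*L*(k:ℝ) - (k:ℝ)/4 ≤ p * M := by
    rw [hpM]
    rw [le_div_iff₀ hr0]
    have h1 : 4*L*((k:ℝ)*k - k) ≥ 4*L*((k:ℝ)*(r/2-1)) := by
      apply mul_le_mul_of_nonneg_left hkk (by linarith)
    have h2 : (2*L*(k:ℝ) - (k:ℝ)/4)*r ≤ 4*L*((k:ℝ)*(r/2-1)) := by
      have hx : (k:ℝ)*(r - 16*L) ≥ 0 := mul_nonneg hk0 (by linarith)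
      nlinarith
    linarith
  have hlog2 : Real.log 2 < 0.6931471808 := Real.log_two_lt_d9
  have hlog2' : (0:ℝ) < Real.log 2 := Real.log_pos (by norm_num)
  have key : (k:ℕ) * (L * Real.log 2) + (-(p*(M:ℝ))) ≤ -3 := by
    have h1 : (k:ℝ) * (L * Real.log 2) ≤ (k:ℝ) * (L * 0.6931471808) := by
      apply mul_le_mul_of_nonneg_left _ hk0
      apply mul_le_mul_of_nonneg_left (le_of_lt hlog2) (by linarith)
    have h2 : (k:ℝ) * (L * 0.6931471808) - (2*L*(k:ℝ) - (k:ℝ)/4) ≤ -(1.05:ℝ) * k := by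
      have : (k:ℝ) * (L * 0.6931471808) - (2*L*(k:ℝ) - (k:ℝ)/4)
          = -(1.3068528192:ℝ)*(k*L) + 0.25*k := by ring
      rw [this]
      have hkL : (k:ℝ) ≤ (k:ℝ)*L := le_mul_of_one_le_right hk0 hL
      nlinarith
    have h3 : -(1.05:ℝ) * k ≤ -3 := by nlinarith
    push_cast
    linarith
  calc (n:ℝ)^k * (2*(1 - p)^M)
      ≤ Real.exp ((k:ℕ) * (L * Real.log 2)) * (2 * Real.exp (-(p*(M:ℝ)))) := by
        rw [e2]
        apply mul_le_mul_of_nonneg_left _ (le_of_lt (Real.exp_pos _))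
        have := e1
        nlinarith [pow_nonneg h1p M]
    _ = 2 * Real.exp ((k:ℕ) * (L * Real.log 2) + (-(p*(M:ℝ)))) := by
        rw [Real.exp_add]; ring
    _ ≤ 1/4 := two_exp_le _ key

lemma num2 (L r : ℝ) (n r₀ N b : ℕ) (hL : 1 ≤ L) (hr : 16*L ≤ r)
    (hn : 0 < n) (hlogn : Real.log n = L * Real.log 2)
    (hr₀ : r ≤ (r₀:ℝ)) (hN : (N:ℝ)*2 = (r₀:ℝ)*r₀ - r₀)
    (hb : 2*(8*L/r)*(N:ℝ) ≤ (b:ℝ)) :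
    (n:ℝ)^r₀ * (2*((1 + 8*L/r)^N * ((1:ℝ)/2)^b)) ≤ 1/4 := by
  have hr0 : (0:ℝ) < r := by linarith
  set p : ℝ := 8*L/r with hp
  have hp0 : 0 < p := by apply div_pos <;> linarith
  have hr₀16 : (16:ℝ) ≤ (r₀:ℝ) := by linarith
  have hN0 : (0:ℝ) ≤ (N:ℝ) := Nat.cast_nonneg N
  have hlog2 : Real.log 2 < 0.6931471808 := Real.log_two_lt_d9
  have hlog2g : (0.6931471803:ℝ) < Real.log 2 := Real.log_two_gt_d9
  have hlog2' : (0:ℝ) < Real.log 2 := Real.log_pos (by norm_num)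
  have e1 : (1 + p)^N ≤ Real.exp (p*(N:ℝ)) := by
    calc (1+p)^N ≤ (Real.exp p)^N := by
          apply pow_le_pow_left₀ (by linarith)
          linarith [Real.add_one_le_exp p]
      _ = Real.exp ((N:ℕ) * p) := (Real.exp_nat_mul _ N).symm
      _ = Real.exp (p*N) := by rw [mul_comm]
  have e2 : ((1:ℝ)/2)^b = Real.exp (-((b:ℝ) * Real.log 2)) := by
    have : (1:ℝ)/2 = Real.exp (-(Real.log 2)) := by
      rw [Real.exp_neg, Real.exp_log (by norm_num : (0:ℝ) < 2)]
      norm_num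
    rw [this, ← Real.exp_nat_mul]
    congr 1
    ring
  have hn' : (0:ℝ) < (n:ℝ) := by exact_mod_cast hn
  have e3 : (n:ℝ)^r₀ = Real.exp ((r₀:ℕ) * (L * Real.log 2)) := by
    rw [← hlogn, ← Real.exp_log hn', ← Real.exp_nat_mul, Real.exp_log hn']
  -- key exponent bound
  have hpN : p * N = 4*L*((r₀:ℝ)*r₀ - r₀)/r := by
    have hN' : (N:ℝ) = ((r₀:ℝ)*r₀ - r₀)/2 := by linarith
    rw [hp, hN']
    ring
  have hpN2 : (15/4:ℝ)*L*(r₀:ℝ) ≤ p * N := by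
    rw [hpN, le_div_iff₀ hr0]
    have h1 : (r₀:ℝ)*r₀ - r₀ = r₀*((r₀:ℝ)-1) := by ring
    have h2 : (r₀:ℝ) - 1 ≥ (15/16)*r := by linarith
    have h3 : (r₀:ℝ)*((r₀:ℝ)-1) ≥ (r₀:ℝ)*((15/16)*r) := by
      apply mul_le_mul_of_nonneg_left h2 (by linarith)
    nlinarith
  have key : (r₀:ℕ) * (L * Real.log 2) + (p*(N:ℝ) - (b:ℝ)*Real.log 2) ≤ -3 := by
    have hblog : 2*p*(N:ℝ)*Real.log 2 ≤ (b:ℝ)*Real.log 2 := by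
      apply mul_le_mul_of_nonneg_right hb (le_of_lt hlog2')
    have h1 : p*(N:ℝ) - (b:ℝ)*Real.log 2 ≤ -(2*Real.log 2 - 1) * (p*N) := by
      have : -(2*Real.log 2 - 1) * (p*N) = p*N - 2*p*N*Real.log 2 := by ring
      rw [this]
      linarith
    have h2 : -(2*Real.log 2 - 1) * (p*N) ≤ -(0.3862943606:ℝ) * ((15/4)*L*(r₀:ℝ)) := by
      have hc : (0.3862943606:ℝ) ≤ 2*Real.log 2 - 1 := by linarith
      have hpN0 : (0:ℝ) ≤ p * N := mul_nonneg hp0.le hN0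
      nlinarith [hpN2]
    have h3 : ((r₀:ℝ)) * (L * Real.log 2) ≤ (r₀:ℝ) * (L * 0.6931471808) := by
      apply mul_le_mul_of_nonneg_left _ (by linarith)
      apply mul_le_mul_of_nonneg_left (le_of_lt hlog2) (by linarith)
    have h4 : (r₀:ℝ) * (L * 0.6931471808) - (0.3862943606:ℝ) * ((15/4)*L*(r₀:ℝ))
        ≤ -(0.75:ℝ) * ((r₀:ℝ)*L) := by nlinarith [mul_nonneg (by linarith : (0:ℝ) ≤ (r₀:ℝ)) (by linarith : (0:ℝ) ≤ L)]
    have h5 : -(0.75:ℝ) * ((r₀:ℝ)*L) ≤ -12 := by nlinarith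
    push_cast
    linarith
  calc (n:ℝ)^r₀ * (2*((1 + p)^N * ((1:ℝ)/2)^b))
      ≤ Real.exp ((r₀:ℕ) * (L * Real.log 2)) * (2 * Real.exp (p*(N:ℝ) - (b:ℝ)*Real.log 2)) := by
        rw [e3, e2]
        apply mul_le_mul_of_nonneg_left _ (le_of_lt (Real.exp_pos _))
        have h6 : (1+p)^N * Real.exp (-((b:ℝ)*Real.log 2))
            ≤ Real.exp (p*(N:ℝ)) * Real.exp (-((b:ℝ)*Real.log 2)) :=
          mul_le_mul_of_nonneg_right e1 (le_of_lt (Real.exp_pos _))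
        rw [← Real.exp_add] at h6
        have : p*(N:ℝ) + -((b:ℝ)*Real.log 2) = p*(N:ℝ) - (b:ℝ)*Real.log 2 := by ring
        rw [this] at h6
        linarith
    _ = 2 * Real.exp (((r₀:ℕ) * (L * Real.log 2)) + (p*(N:ℝ) - (b:ℝ)*Real.log 2)) := by
        rw [Real.exp_add]; ring
    _ ≤ 1/4 := two_exp_le _ key

lemma num3 (L r : ℝ) (r₀ P K : ℕ) (hL : 1 ≤ L) (hr : 16*L ≤ r)
    (hr₀ : r ≤ (r₀:ℝ)) (hr₀' : (r₀:ℝ) < r + 1)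
    (hPb : (P:ℝ) ≤ 2*(8*L/r)*(((r₀:ℝ)*r₀ - r₀)/2))
    (hT : (r₀:ℝ)^2 ≤ (K:ℝ)*((r₀:ℝ) + 2*(P:ℝ))) :
    r/(17*L) ≤ (K:ℝ) := by
  have hr0 : (0:ℝ) < r := by linarith
  have hr₀0 : (0:ℝ) < (r₀:ℝ) := by linarith
  have hK0 : (0:ℝ) ≤ (K:ℝ) := Nat.cast_nonneg K
  have hd : (r₀:ℝ) + 2*(P:ℝ) ≤ 17*L*(r₀:ℝ) := by
    have h1 : 2*(P:ℝ) ≤ (16*L/r)*((r₀:ℝ)*r₀ - r₀) := by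
      have he : (16*L/r)*((r₀:ℝ)*r₀ - r₀) = 2*(2*(8*L/r)*(((r₀:ℝ)*r₀ - r₀)/2)) := by ring
      rw [he]
      linarith
    have h4 : (16*L/r)*((r₀:ℝ)*r₀ - r₀) ≤ 16*L*(r₀:ℝ) := by
      rw [div_mul_eq_mul_div, div_le_iff₀ hr0]
      have h5 : (r₀:ℝ)*r₀ - r₀ = (r₀:ℝ)*((r₀:ℝ)-1) := by ring
      have h6 : (r₀:ℝ) - 1 ≤ r := by linarith
      nlinarith [mul_nonneg (by linarith : (0:ℝ) ≤ 16*L) hr₀0.le]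
    have h7 : (r₀:ℝ) ≤ L*(r₀:ℝ) := le_mul_of_one_le_left hr₀0.le hL
    linarith
  have hKd : (r₀:ℝ)^2 ≤ (K:ℝ)*(17*L*(r₀:ℝ)) := by
    calc (r₀:ℝ)^2 ≤ (K:ℝ)*((r₀:ℝ) + 2*(P:ℝ)) := hT
      _ ≤ (K:ℝ)*(17*L*(r₀:ℝ)) := mul_le_mul_of_nonneg_left hd hK0
  have hL17 : (0:ℝ) < 17*L := by linarith
  rw [div_le_iff₀ hL17]
  have h8 : (r₀:ℝ) ≤ (K:ℝ)*(17*L) := by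
    by_contra hc
    push_neg at hc
    have h9 : (K:ℝ)*(17*L)*(r₀:ℝ) < (r₀:ℝ)*(r₀:ℝ) := by
      apply mul_lt_mul_of_pos_right hc hr₀0
    nlinarith [hKd]
  linarith

end Scramble

/-- The scrambling lemma: if there is an `n`-vertex graph in which every `m` vertices
contain both a clique and an independent set of size `r`, with `r ≥ 16·log₂ n`, then
there is an `n`-vertex graph `G'` with no clique and no independent set of size `r/2`,
and in which every `m` vertices contain both a clique and an independent set of size
`r/(17·log₂ n)`. -/
theorem scrambling_lemma (n : ℕ) (hn : 2 ≤ n) (m r : ℝ)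
    (hr : 16 * Real.logb 2 n ≤ r)
    (hG : ∃ G : SimpleGraph (Fin n), ∀ A : Finset (Fin n), m ≤ (A.card : ℝ) →
      (∃ K ⊆ A, G.IsClique (K : Set (Fin n)) ∧ r ≤ (K.card : ℝ)) ∧
      (∃ K ⊆ A, (Gᶜ).IsClique (K : Set (Fin n)) ∧ r ≤ (K.card : ℝ))) :
    ∃ G' : SimpleGraph (Fin n),
      (¬ ∃ K : Finset (Fin n), G'.IsClique (K : Set (Fin n)) ∧ r / 2 ≤ (K.card : ℝ)) ∧
      (¬ ∃ K : Finset (Fin n), (G'ᶜ).IsClique (K : Set (Fin n)) ∧ r / 2 ≤ (K.card : ℝ)) ∧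
      ∀ A : Finset (Fin n), m ≤ (A.card : ℝ) →
        (∃ K ⊆ A, G'.IsClique (K : Set (Fin n)) ∧
          r / (17 * Real.logb 2 n) ≤ (K.card : ℝ)) ∧
        (∃ K ⊆ A, (G'ᶜ).IsClique (K : Set (Fin n)) ∧
          r / (17 * Real.logb 2 n) ≤ (K.card : ℝ)) := by
  classical
  obtain ⟨G, hGprop⟩ := hG
  have hnR : (2:ℝ) ≤ (n:ℝ) := by exact_mod_cast hn
  have hn0 : 0 < n := by omega
  set L := Real.logb 2 n with hLdef
  have hL1 : 1 ≤ L := by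
    rw [hLdef, show (1:ℝ) = Real.logb 2 2 from
      (Real.logb_self_eq_one (by norm_num)).symm]
    exact Real.logb_le_logb_of_le one_lt_two (by norm_num) hnR
  have hlog2pos : (0:ℝ) < Real.log 2 := Real.log_pos one_lt_two
  have hlogn : Real.log n = L * Real.log 2 := by
    rw [hLdef, Real.logb, div_mul_cancel₀ _ (ne_of_gt hlog2pos)]
  have hr16 : (16:ℝ) ≤ r := by linarith
  have hr0 : (0:ℝ) < r := by linarith
  set p : ℝ := 8*L/r with hpdef
  have hp0 : 0 < p := div_pos (by linarith) hr0
  have hp1 : p ≤ 1/2 := by rw [hpdef, div_le_iff₀ hr0]; linarith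
  set k₀ : ℕ := ⌈r/2⌉₊ with hk₀def
  set r₀ : ℕ := ⌈r⌉₊ with hr₀def
  have hk₀ : r/2 ≤ (k₀:ℝ) := Nat.le_ceil _
  have hr₀ : r ≤ (r₀:ℝ) := Nat.le_ceil _
  have hr₀' : (r₀:ℝ) < r + 1 := Nat.ceil_lt_add_one hr0.le
  set E : Finset (Fin n × Fin n) := Scramble.pairs Finset.univ with hEdef
  have hpairs_sub : ∀ S : Finset (Fin n), Scramble.pairs S ⊆ E :=
    fun S => Scramble.pairs_mono (Finset.subset_univ S)
  set NR : ℝ := ((r₀:ℝ)*r₀ - r₀)/2 with hNRdef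
  have hNR0 : 0 ≤ NR := by
    rw [hNRdef]
    nlinarith
  set b : ℕ := ⌈2*p*NR⌉₊ with hbdef
  -- patterns
  set patC : Finset (Fin n) → Finset (Fin n × Fin n) :=
    fun S => (Scramble.pairs S).filter (fun q => ¬ G.Adj q.1 q.2) with hpatCdef
  set patI : Finset (Fin n) → Finset (Fin n × Fin n) :=
    fun S => (Scramble.pairs S).filter (fun q => G.Adj q.1 q.2) with hpatIdef
  set badPat : Finset (Fin n) → Bool → Finset (Finset (Fin n × Fin n)) := fun S c =>
    E.powerset.filter (fun ω => ω ∩ Scramble.pairs S = (if c then patC S else patI S))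
    with hbadPatdef
  set badCnt : Finset (Fin n) → Finset (Finset (Fin n × Fin n)) := fun S =>
    E.powerset.filter (fun ω => b ≤ (ω ∩ Scramble.pairs S).card) with hbadCntdef
  set PS1 : Finset (Finset (Fin n)) := Finset.univ.powersetCard k₀ with hPS1def
  set CL : Finset (Finset (Fin n)) :=
    (Finset.univ.powersetCard r₀).filter (fun S => G.IsClique (S : Set (Fin n))) with hCLdef
  set IN : Finset (Finset (Fin n)) :=
    (Finset.univ.powersetCard r₀).filter (fun S => (Gᶜ).IsClique (S : Set (Fin n))) with hINdef
  set Bad : Finset (Finset (Fin n × Fin n)) :=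
    (PS1.biUnion fun S => badPat S true ∪ badPat S false) ∪ ((CL ∪ IN).biUnion badCnt)
    with hBaddef
  have hWnn : ∀ ω, 0 ≤ Scramble.W E p ω :=
    Scramble.W_nonneg hp0.le (by linarith)
  -- cardinality of pairs
  have hcardpairs : ∀ (S : Finset (Fin n)) (k : ℕ), S.card = k →
      ((Scramble.pairs S).card : ℝ) * 2 = (k:ℝ)*k - k := by
    intro S k hk
    have h := Scramble.card_pairs S
    rw [hk] at h
    rcases Nat.eq_zero_or_pos k with rfl | hkpos
    · simp only [Nat.mul_zero, Nat.zero_mul, Nat.zero_sub, Nat.mul_eq_zero] at h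
      have : (Scramble.pairs S).card = 0 := by omega
      rw [this]
      push_cast
      ring
    · have hle : k ≤ k*k := Nat.le_mul_of_pos_left k hkpos
      have h2 := congrArg (Nat.cast : ℕ → ℝ) h
      push_cast [Nat.cast_sub hle] at h2
      push_cast
      linarith
  -- union bound part 1
  have hA : ∀ S ∈ PS1, ∑ ω ∈ (badPat S true ∪ badPat S false), Scramble.W E p ω
      ≤ 1/4 * ((n:ℝ)^k₀)⁻¹ := by
    intro S hS
    have hScard : S.card = k₀ := Finset.mem_powersetCard_univ.mp hS
    have h2 := hcardpairs S k₀ hScard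
    have hnum := Scramble.num1 L r n k₀ (Scramble.pairs S).card hL1 hr
      hn0 hlogn hk₀ h2
    have hb1 : ∑ ω ∈ badPat S true, Scramble.W E p ω
        ≤ (1-p)^((Scramble.pairs S).card) := by
      rw [hbadPatdef]
      simp only [if_true]
      exact Scramble.pattern_bound E (Scramble.pairs S) (patC S) (hpairs_sub S)
        (by rw [hpatCdef]; exact Finset.filter_subset _ _) p hp0.le hp1
    have hb2 : ∑ ω ∈ badPat S false, Scramble.W E p ω
        ≤ (1-p)^((Scramble.pairs S).card) := by
      rw [hbadPatdef]
      simp only [if_false, Bool.false_eq_true]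
      exact Scramble.pattern_bound E (Scramble.pairs S) (patI S) (hpairs_sub S)
        (by rw [hpatIdef]; exact Finset.filter_subset _ _) p hp0.le hp1
    have hup := Scramble.sum_union_le (badPat S true) (badPat S false)
      (Scramble.W E p) hWnn
    have hnpow : (0:ℝ) < (n:ℝ)^k₀ := by positivity
    have hdiv : 2*(1-p)^((Scramble.pairs S).card) ≤ 1/4 * ((n:ℝ)^k₀)⁻¹ := by
      rw [← div_eq_mul_inv, le_div_iff₀ hnpow]
      calc 2*(1-p)^((Scramble.pairs S).card) * (n:ℝ)^k₀
          = (n:ℝ)^k₀ * (2*(1 - 8*L/r)^((Scramble.pairs S).card)) := by rw [← hpdef]; ring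
        _ ≤ 1/4 := hnum
    linarith
  have hsum1 : ∑ ω ∈ PS1.biUnion (fun S => badPat S true ∪ badPat S false),
      Scramble.W E p ω ≤ 1/4 := by
    calc ∑ ω ∈ PS1.biUnion (fun S => badPat S true ∪ badPat S false), Scramble.W E p ω
        ≤ ∑ S ∈ PS1, ∑ ω ∈ (badPat S true ∪ badPat S false), Scramble.W E p ω :=
          Scramble.sum_biUnion_le _ _ _ hWnn
      _ ≤ ∑ _S ∈ PS1, (1/4 * ((n:ℝ)^k₀)⁻¹) := Finset.sum_le_sum hA
      _ = PS1.card * (1/4 * ((n:ℝ)^k₀)⁻¹) := by rw [Finset.sum_const, nsmul_eq_mul]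
      _ ≤ (n:ℝ)^k₀ * (1/4 * ((n:ℝ)^k₀)⁻¹) := by
          apply mul_le_mul_of_nonneg_right _ (by positivity)
          rw [hPS1def]
          rw [Finset.card_powersetCard, Finset.card_univ, Fintype.card_fin]
          calc ((n.choose k₀ : ℕ) : ℝ) ≤ ((n^k₀ : ℕ) : ℝ) := by
                exact_mod_cast Nat.choose_le_pow n k₀
            _ = (n:ℝ)^k₀ := by push_cast; ring
      _ = 1/4 := by
          have hnpow : ((n:ℝ)^k₀) ≠ 0 := by positivity
          field_simp
  -- union bound part 2
  have hB : ∀ S ∈ CL ∪ IN, ∑ ω ∈ badCnt S, Scramble.W E p ω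
      ≤ 1/8 * ((n:ℝ)^r₀)⁻¹ := by
    intro S hS
    have hScard : S.card = r₀ := by
      rcases Finset.mem_union.mp hS with h | h
      · exact Finset.mem_powersetCard_univ.mp (Finset.mem_filter.mp (by rw [hCLdef] at h; exact h)).1
      · exact Finset.mem_powersetCard_univ.mp (Finset.mem_filter.mp (by rw [hINdef] at h; exact h)).1
    have h2 := hcardpairs S r₀ hScard
    have hNreal : ((Scramble.pairs S).card : ℝ) = NR := by rw [hNRdef]; linarith
    have hbge : 2*(8*L/r)*((Scramble.pairs S).card : ℝ) ≤ (b:ℝ) := by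
      rw [hNreal, ← hpdef, hbdef]
      exact Nat.le_ceil _
    have hnum := Scramble.num2 L r n r₀ (Scramble.pairs S).card b hL1
      hr hn0 hlogn hr₀ h2 hbge
    have hcnt := Scramble.count_bound E (Scramble.pairs S) (hpairs_sub S) b p hp0.le hp1
    have h2b : (0:ℝ) < 2^b := by positivity
    have hnpow : (0:ℝ) < (n:ℝ)^r₀ := by positivity
    have hsum : ∑ ω ∈ badCnt S, Scramble.W E p ω
        ≤ (1+p)^((Scramble.pairs S).card) * ((1:ℝ)/2)^b := by
      rw [hbadCntdef]
      have h3 : ((1:ℝ)/2)^b = ((2:ℝ)^b)⁻¹ := by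
        rw [div_pow, one_pow, one_div]
      rw [h3, ← div_eq_mul_inv, le_div_iff₀ h2b, mul_comm]
      exact hcnt
    have hdiv : (1+p)^((Scramble.pairs S).card) * ((1:ℝ)/2)^b
        ≤ 1/8 * ((n:ℝ)^r₀)⁻¹ := by
      rw [← div_eq_mul_inv, le_div_iff₀ hnpow]
      have : (1+p)^((Scramble.pairs S).card) * ((1:ℝ)/2)^b * (n:ℝ)^r₀
          = (n:ℝ)^r₀ * ((1 + 8*L/r)^((Scramble.pairs S).card) * ((1:ℝ)/2)^b) := by
        rw [← hpdef]; ring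
      rw [this]
      linarith
    linarith
  have hsum2 : ∑ ω ∈ (CL ∪ IN).biUnion badCnt, Scramble.W E p ω ≤ 1/4 := by
    calc ∑ ω ∈ (CL ∪ IN).biUnion badCnt, Scramble.W E p ω
        ≤ ∑ S ∈ CL ∪ IN, ∑ ω ∈ badCnt S, Scramble.W E p ω :=
          Scramble.sum_biUnion_le _ _ _ hWnn
      _ ≤ ∑ _S ∈ CL ∪ IN, (1/8 * ((n:ℝ)^r₀)⁻¹) := Finset.sum_le_sum hB
      _ = (CL ∪ IN).card * (1/8 * ((n:ℝ)^r₀)⁻¹) := by rw [Finset.sum_const, nsmul_eq_mul]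
      _ ≤ (2*(n:ℝ)^r₀) * (1/8 * ((n:ℝ)^r₀)⁻¹) := by
          apply mul_le_mul_of_nonneg_right _ (by positivity)
          have hcu : (CL ∪ IN).card ≤ CL.card + IN.card := Finset.card_union_le _ _
          have hCLc : CL.card ≤ n.choose r₀ := by
            rw [hCLdef]
            calc (Finset.filter _ _).card ≤ (Finset.univ.powersetCard r₀).card :=
                  Finset.card_le_card (Finset.filter_subset _ _)
              _ = n.choose r₀ := by
                  rw [Finset.card_powersetCard, Finset.card_univ, Fintype.card_fin]
          have hINc : IN.card ≤ n.choose r₀ := by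
            rw [hINdef]
            calc (Finset.filter _ _).card ≤ (Finset.univ.powersetCard r₀).card :=
                  Finset.card_le_card (Finset.filter_subset _ _)
              _ = n.choose r₀ := by
                  rw [Finset.card_powersetCard, Finset.card_univ, Fintype.card_fin]
          have hch : ((n.choose r₀ : ℕ) : ℝ) ≤ (n:ℝ)^r₀ := by
            calc ((n.choose r₀ : ℕ) : ℝ) ≤ ((n^r₀ : ℕ) : ℝ) := by
                  exact_mod_cast Nat.choose_le_pow n r₀
              _ = (n:ℝ)^r₀ := by push_cast; ring
          calc ((CL ∪ IN).card : ℝ) ≤ ((CL.card : ℕ) : ℝ) + ((IN.card : ℕ) : ℝ) := by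
                exact_mod_cast hcu
            _ ≤ (n:ℝ)^r₀ + (n:ℝ)^r₀ := by
                have c1 : ((CL.card : ℕ) : ℝ) ≤ ((n.choose r₀ : ℕ) : ℝ) := by exact_mod_cast hCLc
                have c2 : ((IN.card : ℕ) : ℝ) ≤ ((n.choose r₀ : ℕ) : ℝ) := by exact_mod_cast hINc
                linarith
            _ = 2*(n:ℝ)^r₀ := by ring
      _ = 1/4 := by
          have hnpow : ((n:ℝ)^r₀) ≠ 0 := by positivity
          field_simp
          ring
  have hBadsum : ∑ ω ∈ Bad, Scramble.W E p ω < 1 := by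
    rw [hBaddef]
    have := Scramble.sum_union_le (PS1.biUnion fun S => badPat S true ∪ badPat S false)
      ((CL ∪ IN).biUnion badCnt) (Scramble.W E p) hWnn
    linarith
  -- pick a good outcome
  have hgood : ∃ ω ∈ E.powerset, ω ∉ Bad := by
    by_contra hc
    push_neg at hc
    have hsub : E.powerset ⊆ Bad := fun ω hω => hc ω hω
    have h1 : (1:ℝ) = ∑ ω ∈ E.powerset, Scramble.W E p ω := (Scramble.sum_W E p).symm
    have h2 : ∑ ω ∈ E.powerset, Scramble.W E p ω ≤ ∑ ω ∈ Bad, Scramble.W E p ω :=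
      Finset.sum_le_sum_of_subset_of_nonneg hsub (fun ω _ _ => hWnn ω)
    linarith
  obtain ⟨ω, hωE', hωBad⟩ := hgood
  have hωE : ω ⊆ E := Finset.mem_powerset.mp hωE'
  -- the flip relation and the scrambled graph
  set flip : Fin n → Fin n → Prop := fun i j => (i,j) ∈ ω ∨ (j,i) ∈ ω with hflipdef
  have hflip_lt : ∀ i j : Fin n, i < j → (flip i j ↔ (i,j) ∈ ω) := by
    intro i j hij
    constructor
    · rintro (h | h)
      · exact h
      · exact absurd (Scramble.mem_pairs.mp (hωE h)).2.2 (asymm hij)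
    · exact Or.inl
  have hflip_irr : ∀ i : Fin n, ¬ flip i i := by
    intro i
    rintro (h | h) <;> exact absurd (Scramble.mem_pairs.mp (hωE h)).2.2 (lt_irrefl i)
  set G' : SimpleGraph (Fin n) :=
    { Adj := fun i j => ¬ (G.Adj i j ↔ flip i j)
      symm := by
        refine ⟨?_⟩
        intro i j h
        exact fun hc => h ((G.adj_comm i j).trans (hc.trans (or_comm)))
      loopless := ⟨fun i h => h (iff_of_false (G.irrefl) (hflip_irr i))⟩ } with hG'def
  have hG'adj : ∀ i j : Fin n, G'.Adj i j ↔ ¬ (G.Adj i j ↔ flip i j) := fun i j => Iff.rfl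
  refine ⟨G', ?_, ?_, ?_⟩
  · -- no clique of size r/2
    rintro ⟨K, hKcl, hKr⟩
    have hcard : k₀ ≤ K.card := Nat.ceil_le.mpr (by exact_mod_cast hKr)
    obtain ⟨S, hSK, hScard⟩ := Finset.exists_subset_card_eq hcard
    have hScl : G'.IsClique (S : Set (Fin n)) := hKcl.subset (Finset.coe_subset.mpr hSK)
    apply hωBad
    rw [hBaddef]
    apply Finset.mem_union_left
    apply Finset.mem_biUnion.mpr
    refine ⟨S, Finset.mem_powersetCard_univ.mpr hScard, Finset.mem_union_left _ ?_⟩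
    rw [hbadPatdef]
    simp only [if_true]
    rw [Finset.mem_filter]
    refine ⟨hωE', ?_⟩
    ext q
    constructor
    · intro hq
      rw [Finset.mem_inter] at hq
      have hp' := Scramble.mem_pairs.mp hq.2
      have hadj : G'.Adj q.1 q.2 := hScl (Finset.mem_coe.mpr hp'.1)
        (Finset.mem_coe.mpr hp'.2.1) (ne_of_lt hp'.2.2)
      rw [hpatCdef]
      rw [Finset.mem_filter]
      refine ⟨hq.2, ?_⟩
      intro hGadj
      exact (hG'adj q.1 q.2).mp hadj
        (iff_of_true hGadj ((hflip_lt q.1 q.2 hp'.2.2).mpr hq.1))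
    · intro hq
      rw [hpatCdef, Finset.mem_filter] at hq
      have hp' := Scramble.mem_pairs.mp hq.1
      have hadj : G'.Adj q.1 q.2 := hScl (Finset.mem_coe.mpr hp'.1)
        (Finset.mem_coe.mpr hp'.2.1) (ne_of_lt hp'.2.2)
      rw [Finset.mem_inter]
      refine ⟨?_, hq.1⟩
      by_contra hqω
      apply (hG'adj q.1 q.2).mp hadj
      apply iff_of_false hq.2
      rw [hflip_lt q.1 q.2 hp'.2.2]
      exact hqω
  · -- no independent set of size r/2
    rintro ⟨K, hKcl, hKr⟩
    have hcard : k₀ ≤ K.card := Nat.ceil_le.mpr (by exact_mod_cast hKr)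
    obtain ⟨S, hSK, hScard⟩ := Finset.exists_subset_card_eq hcard
    have hScl : (G'ᶜ).IsClique (S : Set (Fin n)) := hKcl.subset (Finset.coe_subset.mpr hSK)
    apply hωBad
    rw [hBaddef]
    apply Finset.mem_union_left
    apply Finset.mem_biUnion.mpr
    refine ⟨S, Finset.mem_powersetCard_univ.mpr hScard, Finset.mem_union_right _ ?_⟩
    rw [hbadPatdef]
    simp only [if_false, Bool.false_eq_true]
    rw [Finset.mem_filter]
    refine ⟨hωE', ?_⟩
    ext q
    constructor
    · intro hq
      rw [Finset.mem_inter] at hq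
      have hp' := Scramble.mem_pairs.mp hq.2
      have hadj : (G'ᶜ).Adj q.1 q.2 := hScl (Finset.mem_coe.mpr hp'.1)
        (Finset.mem_coe.mpr hp'.2.1) (ne_of_lt hp'.2.2)
      have hnadj : ¬ G'.Adj q.1 q.2 := ((G'.compl_adj q.1 q.2).mp hadj).2
      have hiff : G.Adj q.1 q.2 ↔ flip q.1 q.2 := not_not.mp ((hG'adj q.1 q.2).not.mp
        (by simpa using hnadj))
      rw [hpatIdef, Finset.mem_filter]
      exact ⟨hq.2, hiff.mpr ((hflip_lt q.1 q.2 hp'.2.2).mpr hq.1)⟩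
    · intro hq
      rw [hpatIdef, Finset.mem_filter] at hq
      have hp' := Scramble.mem_pairs.mp hq.1
      have hadj : (G'ᶜ).Adj q.1 q.2 := hScl (Finset.mem_coe.mpr hp'.1)
        (Finset.mem_coe.mpr hp'.2.1) (ne_of_lt hp'.2.2)
      have hnadj : ¬ G'.Adj q.1 q.2 := ((G'.compl_adj q.1 q.2).mp hadj).2
      have hiff : G.Adj q.1 q.2 ↔ flip q.1 q.2 := not_not.mp ((hG'adj q.1 q.2).not.mp
        (by simpa using hnadj))
      rw [Finset.mem_inter]
      refine ⟨?_, hq.1⟩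
      rw [← hflip_lt q.1 q.2 hp'.2.2]
      exact hiff.mp hq.2
  · -- every m vertices contain large clique and independent set
    intro A hA
    obtain ⟨⟨K1, hK1A, hK1cl, hK1r⟩, K2, hK2A, hK2cl, hK2r⟩ := hGprop A hA
    have hbpos : 0 < 2*p*NR ∨ True := Or.inr trivial
    constructor
    · -- clique side
      have h1 : r₀ ≤ K1.card := Nat.ceil_le.mpr (by exact_mod_cast hK1r)
      obtain ⟨S, hSK1, hScard⟩ := Finset.exists_subset_card_eq h1
      have hScl : G.IsClique (S : Set (Fin n)) := hK1cl.subset (Finset.coe_subset.mpr hSK1)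
      have hSCL : S ∈ CL := by
        rw [hCLdef, Finset.mem_filter]
        exact ⟨Finset.mem_powersetCard_univ.mpr hScard, hScl⟩
      have hnot : ¬ (b ≤ (ω ∩ Scramble.pairs S).card) := by
        intro hcnt
        apply hωBad
        rw [hBaddef]
        apply Finset.mem_union_right
        apply Finset.mem_biUnion.mpr
        refine ⟨S, Finset.mem_union_left _ hSCL, ?_⟩
        rw [hbadCntdef, Finset.mem_filter]
        exact ⟨hωE', hcnt⟩
      push_neg at hnot
      have hPprop : ∀ q ∈ ω ∩ Scramble.pairs S, q.1 ∈ S ∧ q.2 ∈ S ∧ q.1 < q.2 :=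
        fun q hq => Scramble.mem_pairs.mp (Finset.mem_inter.mp hq).2
      obtain ⟨K, hKS, hKfree, hKT⟩ := Scramble.turan S (ω ∩ Scramble.pairs S) hPprop
      refine ⟨K, hKS.trans (hSK1.trans hK1A), ?_, ?_⟩
      · intro i hi j hj hij
        rw [Finset.mem_coe] at hi hj
        have hiS := hKS hi
        have hjS := hKS hj
        have hGadj : G.Adj i j := hScl (Finset.mem_coe.mpr hiS) (Finset.mem_coe.mpr hjS) hij
        have hnflip : ¬ flip i j := by
          rintro (h | h)
          · have hlt := (Scramble.mem_pairs.mp (hωE h)).2.2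
            exact hKfree i hi j hj (Finset.mem_inter.mpr
              ⟨h, Scramble.mem_pairs.mpr ⟨hiS, hjS, hlt⟩⟩)
          · have hlt := (Scramble.mem_pairs.mp (hωE h)).2.2
            exact hKfree j hj i hi (Finset.mem_inter.mpr
              ⟨h, Scramble.mem_pairs.mpr ⟨hjS, hiS, hlt⟩⟩)
        exact (hG'adj i j).mpr (fun hiff => hnflip (hiff.mp hGadj))
      · -- size bound
        have hPb : ((ω ∩ Scramble.pairs S).card : ℝ) ≤ 2*(8*L/r)*(((r₀:ℝ)*r₀ - r₀)/2) := by
          have hc1 : ((ω ∩ Scramble.pairs S).card : ℝ) ≤ (b:ℝ) - 1 := by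
            have : (ω ∩ Scramble.pairs S).card + 1 ≤ b := hnot
            have h2 : (((ω ∩ Scramble.pairs S).card + 1 : ℕ) : ℝ) ≤ (b:ℝ) := by
              exact_mod_cast this
            push_cast at h2
            linarith
          have hc2 : (b:ℝ) < 2*p*NR + 1 := by
            rw [hbdef]
            exact Nat.ceil_lt_add_one (by positivity)
          have : 2*p*NR = 2*(8*L/r)*(((r₀:ℝ)*r₀ - r₀)/2) := by
            rw [hpdef, hNRdef]
          linarith
        have hT : (r₀:ℝ)^2 ≤ (K.card:ℝ)*((r₀:ℝ) + 2*((ω ∩ Scramble.pairs S).card : ℝ)) := by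
          rw [hScard] at hKT
          exact_mod_cast hKT
        have := Scramble.num3 L r r₀ (ω ∩ Scramble.pairs S).card K.card hL1
          hr hr₀ hr₀' hPb hT
        exact this
    · -- independent set side
      have h1 : r₀ ≤ K2.card := Nat.ceil_le.mpr (by exact_mod_cast hK2r)
      obtain ⟨S, hSK2, hScard⟩ := Finset.exists_subset_card_eq h1
      have hScl : (Gᶜ).IsClique (S : Set (Fin n)) := hK2cl.subset (Finset.coe_subset.mpr hSK2)
      have hSIN : S ∈ IN := by
        rw [hINdef, Finset.mem_filter]
        exact ⟨Finset.mem_powersetCard_univ.mpr hScard, hScl⟩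
      have hnot : ¬ (b ≤ (ω ∩ Scramble.pairs S).card) := by
        intro hcnt
        apply hωBad
        rw [hBaddef]
        apply Finset.mem_union_right
        apply Finset.mem_biUnion.mpr
        refine ⟨S, Finset.mem_union_right _ hSIN, ?_⟩
        rw [hbadCntdef, Finset.mem_filter]
        exact ⟨hωE', hcnt⟩
      push_neg at hnot
      have hPprop : ∀ q ∈ ω ∩ Scramble.pairs S, q.1 ∈ S ∧ q.2 ∈ S ∧ q.1 < q.2 :=
        fun q hq => Scramble.mem_pairs.mp (Finset.mem_inter.mp hq).2
      obtain ⟨K, hKS, hKfree, hKT⟩ := Scramble.turan S (ω ∩ Scramble.pairs S) hPprop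
      refine ⟨K, hKS.trans (hSK2.trans hK2A), ?_, ?_⟩
      · intro i hi j hj hij
        rw [Finset.mem_coe] at hi hj
        have hiS := hKS hi
        have hjS := hKS hj
        have hGnadj : ¬ G.Adj i j :=
          ((G.compl_adj i j).mp (hScl (Finset.mem_coe.mpr hiS) (Finset.mem_coe.mpr hjS) hij)).2
        have hnflip : ¬ flip i j := by
          rintro (h | h)
          · have hlt := (Scramble.mem_pairs.mp (hωE h)).2.2
            exact hKfree i hi j hj (Finset.mem_inter.mpr
              ⟨h, Scramble.mem_pairs.mpr ⟨hiS, hjS, hlt⟩⟩)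
          · have hlt := (Scramble.mem_pairs.mp (hωE h)).2.2
            exact hKfree j hj i hi (Finset.mem_inter.mpr
              ⟨h, Scramble.mem_pairs.mpr ⟨hjS, hiS, hlt⟩⟩)
        rw [G'.compl_adj]
        refine ⟨hij, ?_⟩
        intro hadj
        exact (hG'adj i j).mp hadj (iff_of_false hGnadj hnflip)
      · have hPb : ((ω ∩ Scramble.pairs S).card : ℝ) ≤ 2*(8*L/r)*(((r₀:ℝ)*r₀ - r₀)/2) := by
          have hc1 : ((ω ∩ Scramble.pairs S).card : ℝ) ≤ (b:ℝ) - 1 := by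
            have : (ω ∩ Scramble.pairs S).card + 1 ≤ b := hnot
            have h2 : (((ω ∩ Scramble.pairs S).card + 1 : ℕ) : ℝ) ≤ (b:ℝ) := by
              exact_mod_cast this
            push_cast at h2
            linarith
          have hc2 : (b:ℝ) < 2*p*NR + 1 := by
            rw [hbdef]
            exact Nat.ceil_lt_add_one (by positivity)
          have : 2*p*NR = 2*(8*L/r)*(((r₀:ℝ)*r₀ - r₀)/2) := by
            rw [hpdef, hNRdef]
          linarith
        have hT : (r₀:ℝ)^2 ≤ (K.card:ℝ)*((r₀:ℝ) + 2*((ω ∩ Scramble.pairs S).card : ℝ)) := by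
          rw [hScard] at hKT
          exact_mod_cast hKT
        have := Scramble.num3 L r r₀ (ω ∩ Scramble.pairs S).card K.card hL1
          hr hr₀ hr₀' hPb hT
        exact this
end
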